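/- arXiv:2602.15748 — 6 statements merged into one kernel-verified Lean document; each statement's English description precedes it below -/
import Mathlib

section
/- Let A be a finite-dimensional commutative ℚ-algebra with unit. A full lattice Λ ⊆ A is an idempotent of the semigroup of full lattices under lattice multiplication (i.e., Λ·Λ = Λ) if and only if Λ is an order. -/
def IsFullLattice {A : Type*} [CommRing A] [Algebra ℚ A] (L : Submodule ℤ A) : Prop :=
  L.FG ∧ Submodule.span ℚ (L : Set A) = ⊤

theorem stmt_7 {A : Type*} [CommRing A] [Algebra ℚ A] [FiniteDimensional ℚ A]
    (Λ : Submodule ℤ A) (hΛ : IsFullLattice Λ) :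
    Λ * Λ = Λ ↔ ((1 : A) ∈ Λ ∧ Λ * Λ ≤ Λ) := by
  constructor
  · intro h
    have hle : Λ * Λ ≤ Λ := h.le
    -- every element of the subring generated by Λ multiplies Λ into Λ
    set B : Subring A := Subring.closure (Λ : Set A) with hB
    have hmulB : ∀ b ∈ B, ∀ x ∈ Λ, b * x ∈ Λ := by
      intro b hb
      induction hb using Subring.closure_induction with
      | mem a ha => exact fun x hx => hle (Submodule.mul_mem_mul ha hx)
      | zero => intro x hx; simp
      | one => intro x hx; simpa using hx
      | add a b ha hb pa pb =>
          intro x hx; rw [add_mul]; exact Λ.add_mem (pa x hx) (pb x hx)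
      | neg a ha pa => intro x hx; rw [neg_mul]; exact Λ.neg_mem (pa x hx)
      | mul a b ha hb pa pb =>
          intro x hx; rw [mul_assoc]; exact pa _ (pb x hx)
    -- Λ as a B-submodule of A
    let N : Submodule B A :=
      { carrier := (Λ : Set A)
        add_mem' := fun ha hb => Λ.add_mem ha hb
        zero_mem' := Λ.zero_mem
        smul_mem' := fun b x hx => hmulB b b.2 x hx }
    have hNmem : ∀ x : A, x ∈ N ↔ x ∈ Λ := fun x => Iff.rfl
    -- N is finitely generated over B
    obtain ⟨s, hs⟩ := hΛ.1
    have hNfg : N.FG := by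
      refine ⟨s, le_antisymm ?_ ?_⟩
      · rw [Submodule.span_le]
        intro x hx
        have : x ∈ Λ := hs ▸ Submodule.subset_span hx
        exact this
      · intro x hx
        have hx' : x ∈ Submodule.span ℤ (s : Set A) := hs ▸ (hNmem x).1 hx
        exact Submodule.span_subset_span ℤ B _ hx'
    -- the ideal of B consisting of elements of Λ
    let I : Ideal B :=
      { carrier := {b : B | (b : A) ∈ Λ}
        add_mem' := fun ha hb => Λ.add_mem ha hb
        zero_mem' := Λ.zero_mem
        smul_mem' := fun c x hx => hmulB c c.2 x hx }
    have hNI : N ≤ I • N := by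
      intro x hx
      have hx2 : x ∈ Λ * Λ := by rw [h]; exact (hNmem x).1 hx
      refine Submodule.mul_induction_on hx2 ?_ ?_
      · intro a ha b hb
        have haB : a ∈ B := Subring.subset_closure ha
        have : (⟨a, haB⟩ : B) ∈ I := ha
        have := Submodule.smul_mem_smul this ((hNmem b).2 hb)
        exact this
      · intro a b ha hb; exact (I • N).add_mem ha hb
    obtain ⟨r, hrI, hr⟩ :=
      Submodule.exists_mem_and_smul_eq_self_of_fg_of_le_smul I N hNfg hNI
    -- e := ↑r ∈ Λ acts as identity on Λ
    have he : ∀ x ∈ Λ, (r : A) * x = x := fun x hx => hr x ((hNmem x).2 hx)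
    -- hence on all of A by ℚ-linearity, so e = 1
    have h1 : (1 : A) ∈ Submodule.span ℚ (Λ : Set A) := hΛ.2 ▸ Submodule.mem_top
    have hone : (r : A) * 1 = 1 := by
      refine Submodule.span_induction (fun x hx => he x hx) (by simp) ?_ ?_ h1
      · intro x y _ _ px py; rw [mul_add, px, py]
      · intro q x _ px; rw [Algebra.mul_smul_comm, px]
    have : (1 : A) = (r : A) := by rw [← hone, mul_one]
    exact ⟨this ▸ hrI, hle⟩
  · rintro ⟨h1, hle⟩
    refine le_antisymm hle ?_
    intro x hx
    have := Submodule.mul_mem_mul hx h1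
    simpa using this
end

section
/- Let A be a finite-dimensional commutative ℚ-algebra with unit, Λ an order in A, and L a full lattice with 1_A ∈ L, L ⊆ Λ, and L not an order. Then there is a unique l ≥ 2 such that L ⊊ L² ⊊ ... ⊊ L^l = L^{l+k} ⊆ Λ for all k ≥ 1; moreover L^l is an order with L·L^l = L^l, and the lattices L, L², ..., L^{l-1} are not invertible in the semigroup of full lattices. -/
/-- Invertibility in the commutative semigroup of full lattices. -/
def IsInvLat {A : Type*} [CommRing A] [Algebra ℚ A] (L : Submodule ℤ A) : Prop :=
  ∃ B C : Submodule ℤ A, IsFullLattice B ∧ IsFullLattice C ∧ L * B = C ∧ L * C = L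

theorem stmt_8 {A : Type*} [CommRing A] [Algebra ℚ A] [FiniteDimensional ℚ A]
    (Λ L : Submodule ℤ A) (hΛ : IsFullLattice Λ) (hΛ1 : (1 : A) ∈ Λ)
    (hΛm : Λ * Λ ≤ Λ) (hL : IsFullLattice L) (hL1 : (1 : A) ∈ L) (hLΛ : L ≤ Λ)
    (hnot : ¬ ((1 : A) ∈ L ∧ L * L ≤ L)) :
    ∃! l : ℕ, 2 ≤ l ∧ (∀ k, 1 ≤ k → k < l → L ^ k < L ^ (k + 1)) ∧
      (∀ k, L ^ (l + k) = L ^ l) ∧ L ^ l ≤ Λ ∧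
      ((1 : A) ∈ L ^ l ∧ L ^ l * L ^ l ≤ L ^ l) ∧ L * L ^ l = L ^ l ∧
      (∀ k, 1 ≤ k → k < l → ¬ IsInvLat (L ^ k)) := by
  classical
  have h1L : (1 : Submodule ℤ A) ≤ L := Submodule.one_le.mpr hL1
  -- monotonicity of powers
  have hmono : ∀ m n : ℕ, m ≤ n → L ^ m ≤ L ^ n := by
    intro m n h
    induction n with
    | zero => simpa [Nat.le_zero.mp h]
    | succ n ih =>
      rcases Nat.lt_or_ge m (n+1) with h' | h'
      · refine le_trans (ih (by omega)) ?_
        calc L ^ n = L ^ n * 1 := (mul_one _).symm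
        _ ≤ L ^ n * L := mul_le_mul_right h1L _
        _ = L ^ (n+1) := (pow_succ L n).symm
      · have : m = n + 1 := by omega
        simp [this]
  -- all positive powers are inside Λ
  have hpow : ∀ n : ℕ, L ^ (n + 1) ≤ Λ := by
    intro n
    induction n with
    | zero => simpa using hLΛ
    | succ n ih =>
      rw [pow_succ]
      exact le_trans (mul_le_mul' ih hLΛ) hΛm
  -- the chain stabilizes, by Noetherianity of Λ
  have hstab : ∃ n : ℕ, L ^ (n + 1) = L ^ (n + 2) := by
    haveI : IsNoetherian ℤ Λ := isNoetherian_of_fg_of_noetherian Λ hΛ.1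
    obtain ⟨n, hn⟩ := (monotone_stabilizes_iff_noetherian.mpr this)
      ⟨fun k => Submodule.comap Λ.subtype (L ^ (k + 1)),
        fun a b hab => Submodule.comap_mono (hmono _ _ (by omega))⟩
    refine ⟨n, ?_⟩
    have h2 : Submodule.comap Λ.subtype (L ^ (n + 1)) = Submodule.comap Λ.subtype (L ^ (n + 2)) :=
      hn (n + 1) (by omega)
    have h1 := congrArg (Submodule.map Λ.subtype) h2
    rwa [Submodule.map_comap_subtype, Submodule.map_comap_subtype,
      inf_eq_right.mpr (hpow n), inf_eq_right.mpr (hpow (n+1))] at h1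
  have hex : ∃ n : ℕ, 1 ≤ n ∧ L ^ n = L ^ (n + 1) := by
    obtain ⟨n, hn⟩ := hstab
    exact ⟨n + 1, by omega, hn⟩
  set l := Nat.find hex with hldef
  obtain ⟨hl1, hleq⟩ := Nat.find_spec hex
  rw [← hldef] at hl1 hleq
  have hmin : ∀ m, m < l → ¬(1 ≤ m ∧ L ^ m = L ^ (m + 1)) := fun m hm => Nat.find_min hex hm
  -- l ≥ 2
  have hl2 : 2 ≤ l := by
    rcases Nat.lt_or_ge l 2 with h | h
    · exfalso
      have hl : l = 1 := by omega
      rw [hl] at hleq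
      refine hnot ⟨hL1, ?_⟩
      rw [← pow_two, ← hleq, pow_one]
    · exact h
  -- strict chain below l
  have hstrict : ∀ k, 1 ≤ k → k < l → L ^ k < L ^ (k + 1) := by
    intro k hk1 hkl
    refine lt_of_le_of_ne (hmono _ _ (by omega)) ?_
    intro heq
    exact hmin k hkl ⟨hk1, heq⟩
  -- constancy above l
  have hconst : ∀ k, L ^ (l + k) = L ^ l := by
    intro k
    induction k with
    | zero => rfl
    | succ k ih =>
      have : l + (k + 1) = (l + k) + 1 := by omega
      rw [this, pow_succ, ih, ← pow_succ, ← hleq]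
  refine ⟨l, ⟨hl2, hstrict, hconst, ?_, ⟨?_, ?_⟩, ?_, ?_⟩, ?_⟩
  · have : l = (l - 1) + 1 := by omega
    rw [this]; exact hpow _
  · have := hmono 0 l (by omega)
    rw [pow_zero] at this
    exact Submodule.one_le.mp this
  · rw [← pow_add, hconst]
  · rw [mul_comm, ← pow_succ, ← hleq]
  -- non-invertibility
  · intro k hk1 hkl ⟨B, C, _, _, hB, hC⟩
    -- C acts as identity on L^(k+j)
    have hCid : ∀ j : ℕ, L ^ (k + j) * C = L ^ (k + j) := by
      intro j
      induction j with
      | zero => simpa using hC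
      | succ j ih =>
        have h1 : k + (j + 1) = (k + j) + 1 := by omega
        rw [h1, pow_succ, mul_right_comm, ih]
    -- deduce L^(l-1) = L^l
    have e1 : L ^ (l - 1) * C = L ^ (l - 1) := by
      have : l - 1 = k + (l - 1 - k) := by omega
      rw [this]; exact hCid _
    have e2 : L ^ (l - 1) * C = B * L ^ l := by
      rw [← hB]
      rw [show L ^ (l - 1) * (L ^ k * B) = B * (L ^ (l - 1) * L ^ k) by ring,
        ← pow_add, show l - 1 + k = l + (k - 1) by omega, hconst]
    have e3 : B * L ^ l = L ^ l := by
      have h4 : L ^ l * C = L ^ l := by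
        have : l = k + (l - k) := by omega
        rw [this]; exact hCid _
      calc B * L ^ l = B * L ^ (l + k) := by rw [hconst]
      _ = (L ^ k * B) * L ^ l := by rw [pow_add]; ring
      _ = L ^ l * C := by rw [hB]; ring
      _ = L ^ l := h4
    have : L ^ (l - 1) = L ^ l := by rw [← e1, e2, e3]
    have hlt := hstrict (l - 1) (by omega) (by omega)
    rw [show l - 1 + 1 = l by omega] at hlt
    exact absurd this (ne_of_lt hlt)
  -- uniqueness
  · rintro l' ⟨hl2', hstrict', hconst', -, -, -, -⟩
    by_contra hne
    rcases lt_or_gt_of_ne hne with h | h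
    · exact absurd (hconst' 1) (ne_of_gt (hstrict l' (by omega) h))
    · exact absurd (hconst 1) (ne_of_gt (hstrict' l (by omega) h))
end

section
/- Let A = ℚ·1 ⊕ ℚ·a with a² = 0. Then the orders in A are exactly the lattices ℤ·1 + ℤ·(αa) for α ∈ ℚ_{>0}, and every full lattice in A is invertible; in fact every full lattice equals u·Λ for some unit u ∈ A and some order Λ. -/
open Submodule TrivSqZeroExt DualNumber

/-- A submodule of ℚ contained in a cyclic submodule is principal. -/
lemma rat_principal_of_le_span (N : Submodule ℤ ℚ) (γ : ℚ)
    (h : N ≤ Submodule.span ℤ {γ}) : ∃ β : ℚ, N = Submodule.span ℤ {β} := by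
  set f : ℤ →ₗ[ℤ] ℚ := LinearMap.toSpanSingleton ℤ ℚ γ with hf
  set I : Ideal ℤ := Submodule.comap f N with hI
  obtain ⟨k, hk⟩ := (IsPrincipalIdealRing.principal I).principal
  refine ⟨(k : ℚ) * γ, le_antisymm ?_ ?_⟩
  · intro x hx
    obtain ⟨c, hc⟩ := Submodule.mem_span_singleton.1 (h hx)
    have hcI : c ∈ I := by
      show f c ∈ N
      simpa [hf, LinearMap.toSpanSingleton_apply, hc] using hx
    rw [hk] at hcI
    obtain ⟨d, hd⟩ := Ideal.mem_span_singleton'.1 hcI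
    rw [Submodule.mem_span_singleton]
    refine ⟨d, ?_⟩
    rw [← hc, ← hd, zsmul_eq_mul, zsmul_eq_mul]
    push_cast
    ring
  · rw [Submodule.span_le, Set.singleton_subset_iff]
    have hkI : k ∈ I := by rw [hk]; exact Ideal.subset_span rfl
    have hfk : f k ∈ N := hkI
    simpa [hf, LinearMap.toSpanSingleton_apply, zsmul_eq_mul] using hfk

/-- A f.g. ℤ-submodule of ℚ has a common denominator. -/
lemma rat_fg_le_span (M : Submodule ℤ ℚ) (hM : M.FG) :
    ∃ γ : ℚ, M ≤ Submodule.span ℤ {γ} := by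
  obtain ⟨S, hS⟩ := hM
  set n : ℤ := ∏ q ∈ S, (q.den : ℤ) with hn
  have hn0 : (0:ℤ) < n := Finset.prod_pos (fun q _ => by exact_mod_cast q.pos)
  have hnQ0 : (n : ℚ) ≠ 0 := by exact_mod_cast hn0.ne'
  refine ⟨(n : ℚ)⁻¹, ?_⟩
  rw [← hS]
  apply Submodule.span_le.2
  intro q hq
  rcases Finset.dvd_prod_of_mem (fun q : ℚ => (q.den : ℤ)) hq with ⟨m, hm⟩
  rw [SetLike.mem_coe, Submodule.mem_span_singleton]
  refine ⟨q.num * m, ?_⟩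
  have hden : ((q.den : ℚ)) ≠ 0 := by exact_mod_cast q.den_ne_zero
  have hnQ : (n : ℚ) = (q.den : ℚ) * (m:ℚ) := by rw [hn, hm]; push_cast; ring
  have hm0 : (m:ℚ) ≠ 0 := fun h => hnQ0 (by rw [hnQ, h, mul_zero])
  have hq' : (q:ℚ) * (q.den:ℚ) = q.num := Rat.mul_den_eq_num q
  rw [zsmul_eq_mul, hnQ]
  push_cast
  field_simp
  linear_combination (-1 : ℚ) * hq'

lemma rat_principal_of_le_fg (N M : Submodule ℤ ℚ) (hle : N ≤ M) (hM : M.FG) :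
    ∃ β : ℚ, N = Submodule.span ℤ {β} := by
  obtain ⟨γ, hγ⟩ := rat_fg_le_span M hM
  exact rat_principal_of_le_span N γ (hle.trans hγ)

/-- A f.g. multiplicatively closed ℤ-submodule of ℚ containing 1 is ℤ. -/
lemma rat_order (M : Submodule ℤ ℚ) (hfg : M.FG) (h1 : (1:ℚ) ∈ M)
    (hmul : M * M ≤ M) : M = Submodule.span ℤ {(1:ℚ)} := by
  obtain ⟨β, hβ⟩ := rat_principal_of_le_fg M M le_rfl hfg
  obtain ⟨c, hc⟩ := Submodule.mem_span_singleton.1 (hβ ▸ h1)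
  have hβ0 : β ≠ 0 := by
    rintro rfl
    rw [smul_zero] at hc
    exact one_ne_zero hc.symm
  have hβM : β ∈ M := by rw [hβ]; exact Submodule.mem_span_singleton_self β
  have hββ : β * β ∈ M := hmul (Submodule.mul_mem_mul hβM hβM)
  obtain ⟨d, hd⟩ := Submodule.mem_span_singleton.1 (hβ ▸ hββ)
  have hβd : β = (d : ℚ) := by
    rw [zsmul_eq_mul] at hd
    have := mul_right_cancel₀ hβ0 (hd.trans (mul_comm β β))
    exact this.symm
  have hcd : c * d = 1 := by
    have : (c : ℚ) * (d : ℚ) = 1 := by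
      rw [← hβd, ← zsmul_eq_mul, hc]
    exact_mod_cast this
  have hd1 : d = 1 ∨ d = -1 := Int.isUnit_iff.1 (IsUnit.of_mul_eq_one (a := d) c (by linarith [hcd, mul_comm c d]))
  rw [hβ, hβd]
  rcases hd1 with rfl | rfl
  · norm_num
  · have : Submodule.span ℤ {((-1 : ℤ) : ℚ)} = Submodule.span ℤ {(1:ℚ)} := by
      push_cast
      rw [show (-1 : ℚ) = -(1:ℚ) by ring, ← Set.neg_singleton, Submodule.span_neg]
    exact this

noncomputable section AuxDN

abbrev Aq := DualNumber ℚ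

def fstL : Aq →ₗ[ℤ] ℚ := ((TrivSqZeroExt.fstHom ℚ ℚ ℚ).toLinearMap.restrictScalars ℤ)
def sndL : Aq →ₗ[ℤ] ℚ := ((TrivSqZeroExt.sndHom ℚ ℚ).restrictScalars ℤ)

@[simp] lemma fstL_apply (x : Aq) : fstL x = x.fst := rfl
@[simp] lemma sndL_apply (x : Aq) : sndL x = x.snd := rfl

lemma eq_smul_eps_of_fst_eq_zero (x : Aq) (h : x.fst = 0) : x = x.snd • eps := by
  have := TrivSqZeroExt.inl_fst_add_inr_snd_eq x
  rw [h] at this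
  rw [← this, inr_eq_smul_eps]
  simp

lemma fst_smul_one_add_snd_smul_eps (x : Aq) : x.fst • (1 : Aq) + x.snd • eps = x := by
  ext <;> simp

/-- some element of a full lattice has nonzero first component -/
lemma exists_fst_ne_zero (L : Submodule ℤ Aq) (hspan : Submodule.span ℚ (L : Set Aq) = ⊤) :
    ∃ x ∈ L, x.fst ≠ 0 := by
  by_contra h
  push_neg at h
  have hle : Submodule.span ℚ (L : Set Aq) ≤ LinearMap.ker (TrivSqZeroExt.fstHom ℚ ℚ ℚ).toLinearMap := by
    rw [Submodule.span_le]
    intro x hx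
    simpa using h x hx
  rw [hspan, top_le_iff] at hle
  have h1 : (1 : Aq) ∈ LinearMap.ker (TrivSqZeroExt.fstHom ℚ ℚ ℚ).toLinearMap := hle ▸ Submodule.mem_top
  simp [LinearMap.mem_ker] at h1

/-- given a reference element with nonzero fst, find an element of L with fst 0 and snd nonzero -/
lemma exists_ker_ne_zero (L : Submodule ℤ Aq) (hspan : Submodule.span ℚ (L : Set Aq) = ⊤)
    (x₀ : Aq) (hx₀ : x₀ ∈ L) (hβ : x₀.fst ≠ 0) :
    ∃ z ∈ L, z.fst = 0 ∧ z.snd ≠ 0 := by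
  set φ : Aq →ₗ[ℚ] ℚ := x₀.fst • (TrivSqZeroExt.sndHom ℚ ℚ)
      - x₀.snd • (TrivSqZeroExt.fstHom ℚ ℚ ℚ).toLinearMap with hφ
  have hφeps : φ eps = x₀.fst := by simp [hφ]
  obtain ⟨y, hy, hφy⟩ : ∃ y ∈ L, φ y ≠ 0 := by
    by_contra h
    push_neg at h
    have hle : Submodule.span ℚ (L : Set Aq) ≤ LinearMap.ker φ := by
      rw [Submodule.span_le]; intro x hx; simpa using h x hx
    rw [hspan, top_le_iff] at hle
    have := hle ▸ Submodule.mem_top (x := eps)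
    rw [LinearMap.mem_ker, hφeps] at this
    exact hβ this
  refine ⟨(y.fst.den * x₀.fst.num) • y - (x₀.fst.den * y.fst.num) • x₀,
    Submodule.sub_mem L (Submodule.smul_mem L _ hy) (Submodule.smul_mem L _ hx₀), ?_, ?_⟩
  · have h1 : (y.fst.den : ℚ) * y.fst = y.fst.num := by rw [mul_comm]; exact Rat.mul_den_eq_num _
    have h2 : (x₀.fst.den : ℚ) * x₀.fst = x₀.fst.num := by rw [mul_comm]; exact Rat.mul_den_eq_num _
    show ((y.fst.den * x₀.fst.num : ℤ) • y - (x₀.fst.den * y.fst.num : ℤ) • x₀).fst = 0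
    rw [TrivSqZeroExt.fst_sub, TrivSqZeroExt.fst_smul, TrivSqZeroExt.fst_smul,
      zsmul_eq_mul, zsmul_eq_mul]
    push_cast
    linear_combination (x₀.fst.num : ℚ) * h1 - (y.fst.num : ℚ) * h2
  · have h1 : (y.fst.den : ℚ) * y.fst = y.fst.num := by rw [mul_comm]; exact Rat.mul_den_eq_num _
    have h2 : (x₀.fst.den : ℚ) * x₀.fst = x₀.fst.num := by rw [mul_comm]; exact Rat.mul_den_eq_num _
    have hφy' : x₀.fst * y.snd - x₀.snd * y.fst = φ y := by simp [hφ]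
    have hden1 : ((y.fst.den : ℚ)) ≠ 0 := by exact_mod_cast y.fst.den_ne_zero
    have hden2 : ((x₀.fst.den : ℚ)) ≠ 0 := by exact_mod_cast x₀.fst.den_ne_zero
    show ((y.fst.den * x₀.fst.num : ℤ) • y - (x₀.fst.den * y.fst.num : ℤ) • x₀).snd ≠ 0
    rw [TrivSqZeroExt.snd_sub, TrivSqZeroExt.snd_smul, TrivSqZeroExt.snd_smul,
      zsmul_eq_mul, zsmul_eq_mul]
    push_cast
    have key : (y.fst.den : ℚ) * (x₀.fst.num) * y.snd - (x₀.fst.den : ℚ) * (y.fst.num) * x₀.snd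
        = (y.fst.den : ℚ) * (x₀.fst.den : ℚ) * (φ y) := by
      rw [← hφy']
      linear_combination ((x₀.fst.den:ℚ) * x₀.snd) * h1 - ((y.fst.den:ℚ) * y.snd) * h2
    rw [key]
    exact mul_ne_zero (mul_ne_zero hden1 hden2) hφy


/-- description of the kernel part of a full lattice -/
lemma ker_part (L : Submodule ℤ Aq) (hfg : L.FG) (hspan : Submodule.span ℚ (L : Set Aq) = ⊤) :
    ∃ δ : ℚ, δ ≠ 0 ∧ δ • eps ∈ L ∧
      ∀ x ∈ L, x.fst = 0 → ∃ c : ℤ, x = c • (δ • eps) := by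
  obtain ⟨x₀, hx₀, hβ⟩ := exists_fst_ne_zero L hspan
  obtain ⟨z, hz, hzf, hzs⟩ := exists_ker_ne_zero L hspan x₀ hx₀ hβ
  set N : Submodule ℤ ℚ := Submodule.map sndL (L ⊓ LinearMap.ker fstL) with hN
  obtain ⟨δ, hδ⟩ := rat_principal_of_le_fg N (Submodule.map sndL L)
    (Submodule.map_mono inf_le_left) (hfg.map _)
  have hzN : z.snd ∈ N := ⟨z, ⟨hz, by simpa [LinearMap.mem_ker] using hzf⟩, rfl⟩
  have hδ0 : δ ≠ 0 := by
    rintro rfl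
    rw [hδ] at hzN
    simp only [Submodule.span_zero_singleton, Submodule.mem_bot] at hzN
    exact hzs hzN
  have hδN : δ ∈ N := by rw [hδ]; exact Submodule.mem_span_singleton_self δ
  obtain ⟨w, ⟨hwL, hwk⟩, hws⟩ := hδN
  have hwf : w.fst = 0 := by simpa [LinearMap.mem_ker] using hwk
  have hweq : w = δ • eps := by rw [← hws]; exact eq_smul_eps_of_fst_eq_zero w hwf
  refine ⟨δ, hδ0, hweq ▸ hwL, ?_⟩
  intro x hx hxf
  have hxN : x.snd ∈ N := ⟨x, ⟨hx, by simpa [LinearMap.mem_ker] using hxf⟩, rfl⟩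
  rw [hδ] at hxN
  obtain ⟨c, hc⟩ := Submodule.mem_span_singleton.1 hxN
  refine ⟨c, ?_⟩
  rw [eq_smul_eps_of_fst_eq_zero x hxf, ← hc, smul_assoc]

/-- description of the fst image of a full lattice -/
lemma fst_part (L : Submodule ℤ Aq) (hfg : L.FG) (hspan : Submodule.span ℚ (L : Set Aq) = ⊤) :
    ∃ β : ℚ, β ≠ 0 ∧ Submodule.map fstL L = Submodule.span ℤ {β} := by
  obtain ⟨x₀, hx₀, hβ0⟩ := exists_fst_ne_zero L hspan
  obtain ⟨β, hβ⟩ := rat_principal_of_le_fg (Submodule.map fstL L) (Submodule.map fstL L)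
    le_rfl (hfg.map _)
  refine ⟨β, ?_, hβ⟩
  rintro rfl
  have : x₀.fst ∈ Submodule.map fstL L := ⟨x₀, hx₀, rfl⟩
  rw [hβ] at this
  simp only [Submodule.span_zero_singleton, Submodule.mem_bot] at this
  exact hβ0 this


lemma one_mem_spanPair (α : ℚ) : (1 : Aq) ∈ Submodule.span ℤ {1, α • eps} :=
  Submodule.subset_span (Set.mem_insert _ _)

lemma smul_eps_mem_spanPair (α : ℚ) : α • eps ∈ Submodule.span ℤ ({1, α • eps} : Set Aq) :=
  Submodule.subset_span (Set.mem_insert_of_mem _ rfl)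

lemma spanPair_mul_le (α : ℚ) :
    Submodule.span ℤ ({1, α • eps} : Set Aq) * Submodule.span ℤ ({1, α • eps} : Set Aq)
      ≤ Submodule.span ℤ ({1, α • eps} : Set Aq) := by
  rw [Submodule.span_mul_span]
  rw [Submodule.span_le]
  rintro z hz
  rw [Set.mem_mul] at hz
  obtain ⟨x, hx, y, hy, rfl⟩ := hz
  rcases hx with rfl | rfl <;> rcases hy with rfl | rfl
  · simpa using one_mem_spanPair α
  · simpa using smul_eps_mem_spanPair α
  · simpa using smul_eps_mem_spanPair α
  · have : (α • eps : Aq) * (α • eps) = 0 := by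
      rw [smul_mul_assoc, mul_smul_comm, eps_mul_eps]
      simp
    rw [this]
    exact Submodule.zero_mem _

lemma spanPair_rat_span (α : ℚ) (hα : α ≠ 0) :
    Submodule.span ℚ ((Submodule.span ℤ ({1, α • eps} : Set Aq) : Submodule ℤ Aq) : Set Aq) = ⊤ := by
  rw [eq_top_iff]
  intro x _
  have hmem : x ∈ Submodule.span ℚ ({1, α • eps} : Set Aq) := by
    rw [Submodule.mem_span_pair]
    refine ⟨x.fst, x.snd / α, ?_⟩
    rw [smul_smul, div_mul_cancel₀ _ hα]
    exact fst_smul_one_add_snd_smul_eps x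
  refine Submodule.span_mono ?_ hmem
  intro y hy
  exact Submodule.subset_span hy

lemma spanPair_fg (α : ℚ) : (Submodule.span ℤ ({1, α • eps} : Set Aq)).FG :=
  Submodule.fg_span (Set.toFinite _)

lemma spanPair_isFullLattice_order (α : ℚ) (hα : α ≠ 0) :
    (Submodule.span ℤ ({1, α • eps} : Set Aq)).FG ∧
    Submodule.span ℚ ((Submodule.span ℤ ({1, α • eps} : Set Aq) : Submodule ℤ Aq) : Set Aq) = ⊤ ∧
    (1 : Aq) ∈ Submodule.span ℤ ({1, α • eps} : Set Aq) ∧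
    Submodule.span ℤ ({1, α • eps} : Set Aq) * Submodule.span ℤ ({1, α • eps} : Set Aq)
      ≤ Submodule.span ℤ ({1, α • eps} : Set Aq) :=
  ⟨spanPair_fg α, spanPair_rat_span α hα, one_mem_spanPair α, spanPair_mul_le α⟩

lemma span_pair_neg_snd (a b : Aq) : Submodule.span ℤ {a, -b} = Submodule.span ℤ {a, b} := by
  apply le_antisymm
  · rw [Submodule.span_le]
    rintro x (rfl | rfl)
    · exact Submodule.subset_span (Set.mem_insert _ _)
    · exact Submodule.neg_mem _ (Submodule.subset_span (Set.mem_insert_of_mem _ rfl))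
  · rw [Submodule.span_le]
    rintro x (rfl | rfl)
    · exact Submodule.subset_span (Set.mem_insert _ _)
    · have : -x ∈ ({a, -x} : Set Aq) := Set.mem_insert_of_mem _ rfl
      have h2 := Submodule.neg_mem _ (Submodule.subset_span this : -x ∈ Submodule.span ℤ {a, -x})
      simpa using h2


lemma map_mulLeft_mul (u v : Aq) (M N : Submodule ℤ Aq) :
    Submodule.map (LinearMap.mulLeft ℤ u) M * Submodule.map (LinearMap.mulLeft ℤ v) N
      = Submodule.map (LinearMap.mulLeft ℤ (u * v)) (M * N) := by
  apply le_antisymm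
  · apply Submodule.mul_le.2
    rintro _ ⟨x, hx, rfl⟩ _ ⟨y, hy, rfl⟩
    refine ⟨x * y, Submodule.mul_mem_mul hx hy, ?_⟩
    simp only [LinearMap.mulLeft_apply]
    ring
  · rw [Submodule.map_le_iff_le_comap]
    apply Submodule.mul_le.2
    intro x hx y hy
    simp only [Submodule.mem_comap, LinearMap.mulLeft_apply]
    have h : (u * v) * (x * y) = (u * x) * (v * y) := by ring
    rw [h]
    exact Submodule.mul_mem_mul ⟨x, hx, rfl⟩ ⟨y, hy, rfl⟩

lemma div_self_map (u : Aq) (hu : IsUnit u) (Λ : Submodule ℤ Aq) (h1 : (1:Aq) ∈ Λ)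
    (hm : Λ * Λ ≤ Λ) :
    (Submodule.map (LinearMap.mulLeft ℤ u) Λ) / (Submodule.map (LinearMap.mulLeft ℤ u) Λ) = Λ := by
  ext x
  rw [Submodule.mem_div_iff_forall_mul_mem]
  constructor
  · intro h
    have huΛ : u ∈ Submodule.map (LinearMap.mulLeft ℤ u) Λ :=
      ⟨1, h1, by simp [LinearMap.mulLeft_apply]⟩
    obtain ⟨z, hz, hzx⟩ := h u huΛ
    simp only [LinearMap.mulLeft_apply] at hzx
    have : u * z = u * x := by rw [hzx]; ring
    rwa [← hu.mul_left_cancel this]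
  · rintro hx _ ⟨y, hy, rfl⟩
    refine ⟨x * y, hm (Submodule.mul_mem_mul hx hy), ?_⟩
    simp only [LinearMap.mulLeft_apply]
    ring

lemma span_top_map (u : Aq) (hu : IsUnit u) (L : Submodule ℤ Aq)
    (h : Submodule.span ℚ (L : Set Aq) = ⊤) :
    Submodule.span ℚ ((Submodule.map (LinearMap.mulLeft ℤ u) L : Submodule ℤ Aq) : Set Aq) = ⊤ := by
  have hset : ((Submodule.map (LinearMap.mulLeft ℤ u) L : Submodule ℤ Aq) : Set Aq)
      = (LinearMap.mulLeft ℚ u) '' (L : Set Aq) := by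
    ext x
    simp [LinearMap.mulLeft_apply]
  rw [hset, Submodule.span_image, h, Submodule.map_top, LinearMap.range_eq_top]
  intro x
  obtain ⟨v, hv⟩ := hu.exists_right_inv
  exact ⟨v * x, by simp only [LinearMap.mulLeft_apply]; rw [← mul_assoc, hv, one_mul]⟩


lemma order_structure (Λ : Submodule ℤ Aq) (hfg : Λ.FG)
    (hspan : Submodule.span ℚ (Λ : Set Aq) = ⊤)
    (h1 : (1:Aq) ∈ Λ) (hmul : Λ * Λ ≤ Λ) :
    ∃ α : ℚ, 0 < α ∧ Λ = Submodule.span ℤ {1, α • eps} := by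
  have hF : Submodule.map fstL Λ = Submodule.span ℤ {(1:ℚ)} := by
    apply rat_order _ (hfg.map _) ⟨1, h1, by simp⟩
    apply Submodule.mul_le.2
    rintro _ ⟨x, hx, rfl⟩ _ ⟨y, hy, rfl⟩
    exact ⟨x * y, hmul (Submodule.mul_mem_mul hx hy), by simp⟩
  obtain ⟨δ, hδ0, hδmem, hδall⟩ := ker_part Λ hfg hspan
  have main : Λ = Submodule.span ℤ {1, δ • eps} := by
    apply le_antisymm
    · intro x hx
      have hxf : x.fst ∈ Submodule.map fstL Λ := ⟨x, hx, rfl⟩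
      rw [hF] at hxf
      obtain ⟨n, hn⟩ := Submodule.mem_span_singleton.1 hxf
      have hz : x - n • (1:Aq) ∈ Λ := Submodule.sub_mem _ hx (Submodule.smul_mem _ _ h1)
      have hzf : (x - n • (1:Aq)).fst = 0 := by
        rw [TrivSqZeroExt.fst_sub, TrivSqZeroExt.fst_smul, TrivSqZeroExt.fst_one, ← hn,
          sub_self]
      obtain ⟨c, hc⟩ := hδall _ hz hzf
      rw [Submodule.mem_span_pair]
      refine ⟨n, c, ?_⟩
      rw [← hc]
      abel
    · rw [Submodule.span_le]
      rintro y (rfl | rfl)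
      · exact h1
      · exact hδmem
  rcases abs_choice δ with h | h
  · exact ⟨|δ|, abs_pos.2 hδ0, by rw [h]; exact main⟩
  · refine ⟨|δ|, abs_pos.2 hδ0, ?_⟩
    rw [h, neg_smul, span_pair_neg_snd]
    exact main

lemma lattice_structure (L : Submodule ℤ Aq) (hfg : L.FG)
    (hspan : Submodule.span ℚ (L : Set Aq) = ⊤) :
    ∃ (u : Aq) (α : ℚ), IsUnit u ∧ 0 < α ∧
      L = Submodule.map (LinearMap.mulLeft ℤ u) (Submodule.span ℤ {1, α • eps}) := by
  obtain ⟨β, hβ0, hF⟩ := fst_part L hfg hspan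
  have hβF : β ∈ Submodule.map fstL L := by
    rw [hF]; exact Submodule.mem_span_singleton_self β
  obtain ⟨x₀, hx₀, hx₀f⟩ := hβF
  have hx₀fst : x₀.fst = β := hx₀f
  obtain ⟨δ, hδ0, hδmem, hδall⟩ := ker_part L hfg hspan
  have hu : IsUnit x₀ := by
    rw [TrivSqZeroExt.isUnit_iff_isUnit_fst, hx₀fst]
    exact isUnit_iff_ne_zero.2 hβ0
  have hxe : x₀ * eps = β • eps := by
    ext
    · simp
    · simp [hx₀fst]
  have hmap : ∀ γ : ℚ,
      Submodule.map (LinearMap.mulLeft ℤ x₀) (Submodule.span ℤ {1, γ • eps})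
        = Submodule.span ℤ {x₀, (γ * β) • eps} := by
    intro γ
    rw [Submodule.map_span]
    congr 1
    rw [Set.image_insert_eq, Set.image_singleton]
    have e1 : (LinearMap.mulLeft ℤ x₀) (1 : Aq) = x₀ := by
      simp [LinearMap.mulLeft_apply]
    have e2 : (LinearMap.mulLeft ℤ x₀) (γ • eps) = (γ * β) • eps := by
      rw [LinearMap.mulLeft_apply, mul_smul_comm, hxe, smul_smul]
    rw [e1, e2]
  have main : L = Submodule.span ℤ {x₀, δ • eps} := by
    apply le_antisymm
    · intro x hx
      have hxf : x.fst ∈ Submodule.map fstL L := ⟨x, hx, rfl⟩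
      rw [hF] at hxf
      obtain ⟨n, hn⟩ := Submodule.mem_span_singleton.1 hxf
      have hz : x - n • x₀ ∈ L := Submodule.sub_mem _ hx (Submodule.smul_mem _ _ hx₀)
      have hzf : (x - n • x₀).fst = 0 := by
        rw [TrivSqZeroExt.fst_sub, TrivSqZeroExt.fst_smul, hx₀fst, ← hn, sub_self]
      obtain ⟨c, hc⟩ := hδall _ hz hzf
      rw [Submodule.mem_span_pair]
      refine ⟨n, c, ?_⟩
      rw [← hc]
      abel
    · rw [Submodule.span_le]
      rintro y (rfl | rfl)
      · exact hx₀
      · exact hδmem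
  have hδβ : δ / β ≠ 0 := div_ne_zero hδ0 hβ0
  rcases abs_choice (δ / β) with h | h
  · refine ⟨x₀, |δ / β|, hu, abs_pos.2 hδβ, ?_⟩
    rw [h, hmap, div_mul_cancel₀ _ hβ0]
    exact main
  · refine ⟨x₀, |δ / β|, hu, abs_pos.2 hδβ, ?_⟩
    rw [h, hmap, neg_mul, div_mul_cancel₀ _ hβ0, neg_smul, span_pair_neg_snd]
    exact main

end AuxDN

theorem stmt_11 :
    let a : DualNumber ℚ := DualNumber.eps
    (∀ Λ : Submodule ℤ (DualNumber ℚ),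
      (IsFullLattice Λ ∧ (1 : DualNumber ℚ) ∈ Λ ∧ Λ * Λ ≤ Λ) ↔
      (∃ α : ℚ, 0 < α ∧
        Λ = Submodule.span ℤ ({1, α • a} : Set (DualNumber ℚ)))) ∧
    (∀ L : Submodule ℤ (DualNumber ℚ), IsFullLattice L →
      (∃ B : Submodule ℤ (DualNumber ℚ), IsFullLattice B ∧ L * B = L / L) ∧
      (∃ u : DualNumber ℚ, ∃ Λ : Submodule ℤ (DualNumber ℚ), IsUnit u ∧
        IsFullLattice Λ ∧ (1 : DualNumber ℚ) ∈ Λ ∧ Λ * Λ ≤ Λ ∧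
        (L : Set (DualNumber ℚ)) = (fun x => u * x) '' (Λ : Set (DualNumber ℚ)))) := by
  intro a
  constructor
  · intro Λ
    constructor
    · rintro ⟨⟨hfg, hspan⟩, h1, hmul⟩
      exact order_structure Λ hfg hspan h1 hmul
    · rintro ⟨α, hα, rfl⟩
      obtain ⟨hfg, hspan, h1, hmul⟩ := spanPair_isFullLattice_order α hα.ne'
      exact ⟨⟨hfg, hspan⟩, h1, hmul⟩
  · rintro L ⟨hfg, hspan⟩
    obtain ⟨u, α, hu, hα, rfl⟩ := lattice_structure L hfg hspan
    obtain ⟨hfgΛ, hspanΛ, h1Λ, hmulΛ⟩ := spanPair_isFullLattice_order α hα.ne'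
    set Λ : Submodule ℤ Aq := Submodule.span ℤ {1, α • eps} with hΛ
    have hΛΛ : Λ * Λ = Λ := by
      apply le_antisymm hmulΛ
      intro x hx
      have := Submodule.mul_mem_mul hx h1Λ
      rwa [mul_one] at this
    constructor
    · obtain ⟨v, huv⟩ := hu.exists_right_inv
      have hv : IsUnit v := IsUnit.of_mul_eq_one (a := v) u (by rw [mul_comm]; exact huv)
      refine ⟨Submodule.map (LinearMap.mulLeft ℤ v) Λ,
        ⟨hfgΛ.map _, span_top_map v hv Λ hspanΛ⟩, ?_⟩
      rw [map_mulLeft_mul, huv, hΛΛ, LinearMap.mulLeft_one, Submodule.map_id,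
        div_self_map u hu Λ h1Λ hmulΛ]
    · refine ⟨u, Λ, hu, ⟨hfgΛ, hspanΛ⟩, h1Λ, hmulΛ, ?_⟩
      ext x
      simp only [Submodule.map_coe, Set.mem_image, SetLike.mem_coe, LinearMap.mulLeft_apply]
end

section
/- Let f(t) = t² − rt + s ∈ ℤ[t] be irreducible over ℚ with r²/4 − s < 0. Then the set M(r,s) of matrices [[a,b],[c,d]] ∈ M₂(ℤ) with a+d = r, ad−bc = s, 0 < |c| ≤ |b|, a−d ∈ (−|c|, |c|], and additionally a−d ∈ [0,|c|] when |c| = |b|, is finite, and every SL₂(ℤ)-conjugacy class of integer matrices with characteristic polynomial f contains exactly one matrix of M(r,s). -/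
private lemma pos_min (A C m x y : ℤ) (hA : 0 < A) (hC : A ≤ C) (hm : -A ≤ m) (hm' : m < A)
    (hxy : ¬(x = 0 ∧ y = 0)) : A ≤ A*x^2 + m*x*y + C*y^2 := by
  rcases eq_or_ne y 0 with hy | hy
  · subst hy
    have hx : x ≠ 0 := fun h => hxy ⟨h, rfl⟩
    have h1 : 1 ≤ x^2 := by rcases hx.lt_or_gt with h | h <;> nlinarith
    nlinarith
  · have hy1 : 1 ≤ y^2 := by rcases hy.lt_or_gt with h | h <;> nlinarith
    rcases eq_or_ne (y^2) 1 with h1 | h1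
    · set z := x*y with hz
      have hz2 : z^2 = x^2 := by rw [hz]; ring_nf; nlinarith [h1]
      have key : A ≤ A*z^2 + m*z + C := by
        rcases le_or_gt 0 z with h | h
        · have : z = 0 ∨ 1 ≤ z := by omega
          rcases this with h' | h'
          · nlinarith
          · nlinarith [mul_nonneg (by linarith : (0:ℤ) ≤ m + A) h,
              mul_nonneg (mul_nonneg hA.le h) (by linarith : (0:ℤ) ≤ z - 1)]
        · have h' : z ≤ -1 := by omega
          nlinarith [mul_nonneg (mul_nonneg hA.le (by linarith : (0:ℤ) ≤ -z)) (by linarith : (0:ℤ) ≤ -z - 1),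
            mul_nonneg (by linarith : (0:ℤ) ≤ A - m) (by linarith : (0:ℤ) ≤ -z)]
      nlinarith [hz2, h1]
    · have hy4 : 4 ≤ y^2 := by
        rcases le_or_gt 2 y with h | h
        · nlinarith
        · rcases le_or_gt y (-2) with h' | h'
          · nlinarith
          · interval_cases y <;> simp_all
      have hm2 : m^2 ≤ A^2 := by nlinarith
      have h3 : 3*A^2 ≤ 4*A*C - m^2 := by nlinarith
      nlinarith [sq_nonneg (2*A*x + m*y), mul_pos hA hA]

private lemma exists_shift (x c : ℤ) (hc : c ≠ 0) :
    ∃ k : ℤ, -|c| < x - 2*k*c ∧ x - 2*k*c ≤ |c| := by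
  have h2c : 0 < 2*|c| := by have := abs_pos.mpr hc; linarith
  set e := (|c| - x) % (2*|c|) with he
  have he0 : 0 ≤ e := Int.emod_nonneg _ (by linarith)
  have he1 : e < 2*|c| := Int.emod_lt_of_pos _ h2c
  set j := (|c| - x) / (2*|c|) with hj
  have hdiv : (|c| - x) = 2*|c| * j + e := (Int.mul_ediv_add_emod _ _).symm
  rcases hc.lt_or_gt with h | h
  · refine ⟨j, ?_, ?_⟩ <;> · rw [abs_of_neg h] at hdiv he1 ⊢; nlinarith
  · refine ⟨-j, ?_, ?_⟩ <;> · rw [abs_of_pos h] at hdiv he1 ⊢; nlinarith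
private lemma eq_min_bounds (c C m x y : ℤ) (hc : 0 < c) (hC : c ≤ C) (hma : -c ≤ m)
    (hmb : m < c) (hE : c*x^2 + m*x*y + C*y^2 = c) : y^2 ≤ 1 ∧ x^2 ≤ 1 := by
  have hm2 : m^2 ≤ c^2 := by nlinarith
  have h3 : 3*c^2 ≤ 4*c*C - m^2 := by nlinarith
  have hy : y^2 ≤ 1 := by
    by_contra h
    push_neg at h
    have h4 : 4 ≤ y^2 := by
      rcases le_or_gt 2 y with hy2 | hy2
      · nlinarith
      · rcases le_or_gt y (-2) with hy3 | hy3
        · nlinarith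
        · interval_cases y <;> norm_num at h
    nlinarith [sq_nonneg (2*c*x + m*y)]
  refine ⟨hy, ?_⟩
  by_contra h
  push_neg at h
  have h4 : 4 ≤ x^2 := by
    rcases le_or_gt 2 x with hy2 | hy2
    · nlinarith
    · rcases le_or_gt x (-2) with hy3 | hy3
      · nlinarith
      · interval_cases x <;> norm_num at h
  nlinarith [mul_nonneg (by linarith : (0:ℤ) ≤ c - m) (sq_nonneg (x+y)),
    mul_nonneg (by linarith : (0:ℤ) ≤ c + m) (sq_nonneg (x-y)),
    mul_nonneg (by linarith : (0:ℤ) ≤ c - m) (sq_nonneg (x-y)),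
    mul_nonneg (by linarith : (0:ℤ) ≤ c + m) (sq_nonneg (x+y)), sq_nonneg y]

private lemma sq_le_one' (u : ℤ) (h : u^2 ≤ 1) : -1 ≤ u ∧ u ≤ 1 := by
  constructor
  · by_contra h'
    push_neg at h'
    nlinarith
  · by_contra h'
    push_neg at h'
    nlinarith

private lemma keyCore (r s a1 b1 c1 d1 a2 b2 c2 d2 p q u v : ℤ)
    (hD : r^2 < 4*s)
    (tr1 : a1 + d1 = r) (det1 : a1*d1 - b1*c1 = s)
    (hb1 : |c1| ≤ |b1|) (hl1 : -|c1| < a1 - d1) (hr1 : a1 - d1 ≤ |c1|)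
    (tie1 : |c1| = |b1| → 0 ≤ a1 - d1)
    (tr2 : a2 + d2 = r) (det2 : a2*d2 - b2*c2 = s)
    (hb2 : |c2| ≤ |b2|) (hl2 : -|c2| < a2 - d2) (hr2 : a2 - d2 ≤ |c2|)
    (tie2 : |c2| = |b2| → 0 ≤ a2 - d2)
    (hdet : p*v - q*u = 1)
    (e1 : p*a2 + q*c2 = a1*p + b1*u) (e2 : p*b2 + q*d2 = a1*q + b1*v)
    (e3 : u*a2 + v*c2 = c1*p + d1*u) (e4 : u*b2 + v*d2 = c1*q + d1*v)
    (hc1 : 0 < c1) (hu : 0 ≤ u) :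
    a1 = a2 ∧ b1 = b2 ∧ c1 = c2 ∧ d1 = d2 := by
  have habs1 : |c1| = c1 := abs_of_pos hc1
  have hdisc1 : (a1 - d1)^2 + 4*(b1*c1) = r^2 - 4*s := by
    linear_combination (a1 + d1 + r)*tr1 - 4*det1
  have hbc1 : b1*c1 < 0 := by linarith [hdisc1, sq_nonneg (a1 - d1), hD]
  have hb1neg : b1 < 0 := by
    rcases le_or_gt 0 b1 with h | h
    · exact absurd hbc1 (not_lt.mpr (mul_nonneg h hc1.le))
    · exact h
  have habsb1 : |b1| = -b1 := abs_of_neg hb1neg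
  have hC1 : c1 ≤ -b1 := by rw [habs1, habsb1] at hb1; exact hb1
  have hm1a : -c1 ≤ d1 - a1 := by rw [habs1] at hr1; linarith
  have hm1b : d1 - a1 < c1 := by rw [habs1] at hl1; linarith
  -- key polynomial identities
  have f1 : c2 = c1*p^2 + (d1-a1)*p*u - b1*u^2 := by
    linear_combination p*e3 - u*e1 - c2*hdet
  have f2 : -b2 = c1*q^2 + (d1-a1)*q*v - b1*v^2 := by
    linear_combination q*e4 - v*e2 + b2*hdet
  have f3 : d2 - a2 = 2*c1*p*q + (d1-a1)*(p*v+q*u) - 2*b1*u*v := by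
    linear_combination p*e4 - u*e2 - v*e1 + q*e3 - (d2-a2)*hdet
  have f4 : c1 = c2*v^2 - (d2-a2)*u*v - b2*u^2 := by
    linear_combination u*e4 - v*e3 - c1*hdet
  have hpu : ¬(p = 0 ∧ u = 0) := by rintro ⟨rfl, rfl⟩; omega
  have hvu : ¬(v = 0 ∧ -u = 0) := by
    rintro ⟨rfl, hu0⟩
    have hu0' : u = 0 := by omega
    subst hu0'; omega
  have hc2low : c1 ≤ c2 := by
    have := pos_min c1 (-b1) (d1-a1) p u hc1 hC1 hm1a hm1b hpu
    linarith [f1]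
  have hc2pos : 0 < c2 := lt_of_lt_of_le hc1 hc2low
  have habs2 : |c2| = c2 := abs_of_pos hc2pos
  have hdisc2 : (a2 - d2)^2 + 4*(b2*c2) = r^2 - 4*s := by
    linear_combination (a2 + d2 + r)*tr2 - 4*det2
  have hbc2 : b2*c2 < 0 := by linarith [hdisc2, sq_nonneg (a2 - d2), hD]
  have hb2neg : b2 < 0 := by
    rcases le_or_gt 0 b2 with h | h
    · exact absurd hbc2 (not_lt.mpr (mul_nonneg h hc2pos.le))
    · exact h
  have habsb2 : |b2| = -b2 := abs_of_neg hb2neg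
  have hC2 : c2 ≤ -b2 := by rw [habs2, habsb2] at hb2; exact hb2
  have hm2a : -c2 ≤ d2 - a2 := by rw [habs2] at hr2; linarith
  have hm2b : d2 - a2 < c2 := by rw [habs2] at hl2; linarith
  have hc1low : c2 ≤ c1 := by
    have := pos_min c2 (-b2) (d2-a2) v (-u) hc2pos hC2 hm2a hm2b hvu
    linarith [f4, this]
  have hceq : c1 = c2 := le_antisymm hc2low hc1low
  have E : c1*p^2 + (d1-a1)*p*u + (-b1)*u^2 = c1 := by linarith [f1, hceq]
  obtain ⟨hu2, hp2⟩ := eq_min_bounds c1 (-b1) (d1-a1) p u hc1 hC1 hm1a hm1b E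
  have hu1 : u ≤ 1 := (sq_le_one' u hu2).2
  interval_cases u
  · -- u = 0
    have hp2' : p^2 = 1 := by
      have h : c1 * p^2 = c1 * 1 := by linarith [E]
      exact mul_left_cancel₀ (ne_of_gt hc1) h
    have hpv : p * v = 1 := by linarith [hdet]
    have hp : p = 1 ∨ p = -1 := Int.isUnit_iff.mp (IsUnit.of_mul_eq_one _ hpv)
    have hf3 : d2 - a2 = (d1 - a1) + 2*c1*(p*q) := by
      linear_combination f3 + (d1-a1)*hpv
    have h1 : c1*(2*(p*q)) < c1*2 := by linarith [hf3, hm2b, hm1a, hceq]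
    have h2 : c1*(-2) < c1*(2*(p*q)) := by linarith [hf3, hm2a, hm1b, hceq]
    have h1' : 2*(p*q) < 2 := lt_of_mul_lt_mul_left h1 hc1.le
    have h2' : -2 < 2*(p*q) := lt_of_mul_lt_mul_left h2 hc1.le
    have hpq : p * q = 0 := by omega
    rcases hp with rfl | rfl
    · have hv : v = 1 := by linarith [hpv]
      have hq : q = 0 := by omega
      subst hv hq
      exact ⟨by omega, by omega, hceq, by omega⟩
    · have hv : v = -1 := by linarith [hpv]
      have hq : q = 0 := by omega
      subst hv hq
      exact ⟨by omega, by omega, hceq, by omega⟩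
  · -- u = 1
    obtain ⟨hpa, hpb⟩ := sq_le_one' p hp2
    interval_cases p
    · -- p = -1 : contradiction
      exfalso
      have h : d1 - a1 = -b1 := by linarith [E]
      linarith
    · -- p = 0 : tie case
      have hCc : -b1 = c1 := by linarith [E]
      have htie : 0 ≤ a1 - d1 := tie1 (by rw [habs1, habsb1]; omega)
      have hq : q = -1 := by omega
      subst hq
      have hf3 : d2 - a2 = -(d1-a1) + c1*(2*v) := by
        linear_combination f3 + 2*v*hCc
      have hv1 : c1*(2*v) < c1*2 := by linarith [hf3, hm2b, hceq, htie, hm1a]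
      have hv2 : c1*(-2) ≤ c1*(2*v) := by linarith [hf3, hm2a, hceq, hm1b, htie]
      have hv1' : 2*v < 2 := lt_of_mul_lt_mul_left hv1 hc1.le
      have hv2' : -2 ≤ 2*v := le_of_mul_le_mul_left hv2 hc1
      have hv : v = 0 ∨ v = -1 := by omega
      rcases hv with rfl | rfl
      · -- v = 0
        have hb2e : -b2 = c1 := by linarith [f2]
        have htie2 : 0 ≤ a2 - d2 := tie2 (by rw [habs2, habsb2]; omega)
        refine ⟨by omega, by omega, hceq, by omega⟩
      · -- v = -1
        have hmm : d1 - a1 = -c1 := by linarith [hm2a, hf3, hceq]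
        have hb2e : -b2 = c1 := by linarith [f2, hmm, hCc]
        refine ⟨by omega, by omega, hceq, by omega⟩
    · -- p = 1
      have hme : d1 - a1 = b1 := by linarith [E]
      have hmc1 : d1 - a1 = -c1 := by omega
      have hmc2 : -b1 = c1 := by omega
      have hq : q = v - 1 := by omega
      subst hq
      have hf3 : d2 - a2 = c1*(2*v - 1) := by
        linear_combination f3 + (2*v-1)*hmc1 + 2*v*hmc2
      have hv1 : c1*(2*v - 1) < c1*1 := by linarith [hf3, hm2b, hceq]
      have hv2 : c1*(-1) ≤ c1*(2*v - 1) := by linarith [hf3, hm2a, hceq]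
      have hv1' : 2*v - 1 < 1 := lt_of_mul_lt_mul_left hv1 hc1.le
      have hv2' : -1 ≤ 2*v - 1 := le_of_mul_le_mul_left hv2 hc1
      have hv : v = 0 := by omega
      subst hv
      have hb2e : -b2 = c1 := by linarith [f2]
      refine ⟨by omega, by omega, hceq, by omega⟩

private def Red (r s : ℤ) (B : Matrix (Fin 2) (Fin 2) ℤ) : Prop :=
  B 0 0 + B 1 1 = r ∧ B 0 0 * B 1 1 - B 0 1 * B 1 0 = s ∧ 0 < |B 1 0| ∧ |B 1 0| ≤ |B 0 1| ∧
  -|B 1 0| < B 0 0 - B 1 1 ∧ B 0 0 - B 1 1 ≤ |B 1 0| ∧ (|B 1 0| = |B 0 1| → 0 ≤ B 0 0 - B 1 1)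

private def mkSL (p q u v : ℤ) (h : p*v - q*u = 1) :
    Matrix.SpecialLinearGroup (Fin 2) ℤ :=
  ⟨!![p, q; u, v], by rw [Matrix.det_fin_two_of]; linarith⟩

private lemma coe_mkSL (p q u v : ℤ) (h : p*v - q*u = 1) :
    (↑(mkSL p q u v h) : Matrix (Fin 2) (Fin 2) ℤ) = !![p, q; u, v] := rfl

private lemma coe_mkSL_inv (p q u v : ℤ) (h : p*v - q*u = 1) :
    (↑((mkSL p q u v h)⁻¹) : Matrix (Fin 2) (Fin 2) ℤ) = !![v, -q; -u, p] := by
  rw [Matrix.SpecialLinearGroup.coe_inv, coe_mkSL, Matrix.adjugate_fin_two]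
  ext i j
  fin_cases i <;> fin_cases j <;> rfl

private lemma conj_mkSL (p q u v a b c d : ℤ) (h : p*v - q*u = 1) :
    (↑((mkSL p q u v h)⁻¹) : Matrix (Fin 2) (Fin 2) ℤ) * !![a,b;c,d] *
      (↑(mkSL p q u v h) : Matrix (Fin 2) (Fin 2) ℤ) =
    !![v*(a*p+b*u) - q*(c*p+d*u), v*(a*q+b*v) - q*(c*q+d*v);
       -u*(a*p+b*u) + p*(c*p+d*u), -u*(a*q+b*v) + p*(c*q+d*v)] := by
  rw [coe_mkSL_inv, coe_mkSL, Matrix.mul_fin_two, Matrix.mul_fin_two]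
  congr 1 <;> ring_nf

private def shiftT (k : ℤ) : Matrix.SpecialLinearGroup (Fin 2) ℤ :=
  mkSL 1 k 0 1 (by ring)

private def swapT (k : ℤ) : Matrix.SpecialLinearGroup (Fin 2) ℤ :=
  mkSL k (-1) 1 0 (by ring)

private lemma conj_shiftT (a b c d k : ℤ) :
    (↑((shiftT k)⁻¹) : Matrix (Fin 2) (Fin 2) ℤ) * !![a,b;c,d] *
      (↑(shiftT k) : Matrix (Fin 2) (Fin 2) ℤ) =
    !![a - k*c, b + k*(a-d) - k^2*c; c, d + k*c] := by
  rw [shiftT, conj_mkSL]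
  congr 1 <;> ring

private lemma conj_swapT (a b c d k : ℤ) :
    (↑((swapT k)⁻¹) : Matrix (Fin 2) (Fin 2) ℤ) * !![a,b;c,d] *
      (↑(swapT k) : Matrix (Fin 2) (Fin 2) ℤ) =
    !![d + k*c, -c; -(b + k*(a-d) - k^2*c), a - k*c] := by
  rw [swapT, conj_mkSL]
  congr 1 <;> ring

private lemma red_mk (r s a b c d : ℤ) :
    Red r s !![a,b;c,d] ↔ (a + d = r ∧ a*d - b*c = s ∧ 0 < |c| ∧ |c| ≤ |b| ∧
      -|c| < a - d ∧ a - d ≤ |c| ∧ (|c| = |b| → 0 ≤ a - d)) := Iff.rfl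

private lemma exists_red (r s : ℤ) (hD : r^2 < 4*s) :
    ∀ n : ℕ, ∀ a b c d : ℤ, c.natAbs = n → a + d = r → a*d - b*c = s →
    ∃ U : Matrix.SpecialLinearGroup (Fin 2) ℤ,
      Red r s ((↑(U⁻¹) : Matrix (Fin 2) (Fin 2) ℤ) * !![a,b;c,d] *
        (↑U : Matrix (Fin 2) (Fin 2) ℤ)) := by
  intro n
  induction n using Nat.strong_induction_on with
  | _ n ih =>
  intro a b c d hn htr hdet
  have hdisc : (a-d)^2 + 4*(b*c) = r^2 - 4*s := by
    linear_combination (a+d+r)*htr - 4*hdet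
  have hbc : b*c < 0 := by linarith [hdisc, sq_nonneg (a-d), hD]
  have hc : c ≠ 0 := by rintro rfl; simp at hbc
  have hcabs : (0:ℤ) < |c| := abs_pos.mpr hc
  obtain ⟨k, hk1, hk2⟩ := exists_shift (a - d) c hc
  have htr1 : (a - k*c) + (d + k*c) = r := by linarith
  have hdet1 : (a - k*c)*(d + k*c) - (b + k*(a-d) - k^2*c)*c = s := by
    linear_combination hdet
  have hdisc1 : ((a - k*c)-(d + k*c))^2 + 4*((b + k*(a-d) - k^2*c)*c) = r^2 - 4*s := by
    linear_combination (a + d + r)*htr1 - 4*hdet1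
  have hbc1 : (b + k*(a-d) - k^2*c)*c < 0 := by
    linarith [hdisc1, sq_nonneg ((a - k*c)-(d + k*c)), hD]
  have had1 : (a - k*c) - (d + k*c) = a - d - 2*k*c := by ring
  rcases le_or_gt |c| |b + k*(a-d) - k^2*c| with hle | hlt
  · by_cases hcase : |c| = |b + k*(a-d) - k^2*c| ∧ (a - k*c) - (d + k*c) < 0
    · refine ⟨swapT k, ?_⟩
      rw [conj_swapT, red_mk]
      simp only [abs_neg]
      refine ⟨by linarith, by linear_combination hdet1, by linarith [hcase.1, hcabs],
        by linarith [hcase.1], by linarith [hcase.1, hcabs, hcase.2],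
        by linarith [hk1, had1, hcase.1], fun _ => by linarith [hcase.2]⟩
    · refine ⟨shiftT k, ?_⟩
      rw [conj_shiftT, red_mk]
      push_neg at hcase
      exact ⟨htr1, hdet1, hcabs, hle, by linarith [hk1, had1], by linarith [hk2, had1], hcase⟩
  · have hb1ne : b + k*(a-d) - k^2*c ≠ 0 := by
      rintro h
      rw [h] at hbc1
      simp at hbc1
    have hlt' : (-(b + k*(a-d) - k^2*c)).natAbs < n := by
      rw [← hn]
      rw [Int.abs_eq_natAbs, Int.abs_eq_natAbs] at hlt
      omega
    obtain ⟨W, hW⟩ := ih _ hlt' (d + k*c) (-c) (-(b + k*(a-d) - k^2*c)) (a - k*c) rfl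
      (by linarith) (by linear_combination hdet1)
    refine ⟨swapT k * W, ?_⟩
    have hco : (↑((swapT k * W)⁻¹) : Matrix (Fin 2) (Fin 2) ℤ) * !![a,b;c,d] *
        (↑(swapT k * W) : Matrix (Fin 2) (Fin 2) ℤ) =
        (↑(W⁻¹) : Matrix (Fin 2) (Fin 2) ℤ) *
          ((↑((swapT k)⁻¹) : Matrix (Fin 2) (Fin 2) ℤ) * !![a,b;c,d] *
            (↑(swapT k) : Matrix (Fin 2) (Fin 2) ℤ)) *
          (↑W : Matrix (Fin 2) (Fin 2) ℤ) := by
      rw [mul_inv_rev, Matrix.SpecialLinearGroup.coe_mul, Matrix.SpecialLinearGroup.coe_mul]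
      simp only [Matrix.mul_assoc]
    rw [hco, conj_swapT]
    exact hW

private lemma keyPos (r s a1 b1 c1 d1 a2 b2 c2 d2 p q u v : ℤ)
    (hD : r^2 < 4*s)
    (tr1 : a1 + d1 = r) (det1 : a1*d1 - b1*c1 = s)
    (hb1 : |c1| ≤ |b1|) (hl1 : -|c1| < a1 - d1) (hr1 : a1 - d1 ≤ |c1|)
    (tie1 : |c1| = |b1| → 0 ≤ a1 - d1)
    (tr2 : a2 + d2 = r) (det2 : a2*d2 - b2*c2 = s)
    (hb2 : |c2| ≤ |b2|) (hl2 : -|c2| < a2 - d2) (hr2 : a2 - d2 ≤ |c2|)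
    (tie2 : |c2| = |b2| → 0 ≤ a2 - d2)
    (hdet : p*v - q*u = 1)
    (e1 : p*a2 + q*c2 = a1*p + b1*u) (e2 : p*b2 + q*d2 = a1*q + b1*v)
    (e3 : u*a2 + v*c2 = c1*p + d1*u) (e4 : u*b2 + v*d2 = c1*q + d1*v)
    (hc1 : 0 < c1) :
    a1 = a2 ∧ b1 = b2 ∧ c1 = c2 ∧ d1 = d2 := by
  rcases le_or_gt 0 u with hu | hu
  · exact keyCore r s a1 b1 c1 d1 a2 b2 c2 d2 p q u v hD tr1 det1 hb1 hl1 hr1 tie1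
      tr2 det2 hb2 hl2 hr2 tie2 hdet e1 e2 e3 e4 hc1 hu
  · exact keyCore r s a1 b1 c1 d1 a2 b2 c2 d2 (-p) (-q) (-u) (-v) hD tr1 det1 hb1 hl1 hr1 tie1
      tr2 det2 hb2 hl2 hr2 tie2 (by linear_combination hdet) (by linear_combination -e1)
      (by linear_combination -e2) (by linear_combination -e3) (by linear_combination -e4)
      hc1 (by linarith)

private lemma keyFull (r s a1 b1 c1 d1 a2 b2 c2 d2 p q u v : ℤ)
    (hD : r^2 < 4*s)
    (tr1 : a1 + d1 = r) (det1 : a1*d1 - b1*c1 = s)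
    (hb1 : |c1| ≤ |b1|) (hl1 : -|c1| < a1 - d1) (hr1 : a1 - d1 ≤ |c1|)
    (tie1 : |c1| = |b1| → 0 ≤ a1 - d1)
    (tr2 : a2 + d2 = r) (det2 : a2*d2 - b2*c2 = s)
    (hb2 : |c2| ≤ |b2|) (hl2 : -|c2| < a2 - d2) (hr2 : a2 - d2 ≤ |c2|)
    (tie2 : |c2| = |b2| → 0 ≤ a2 - d2)
    (hdet : p*v - q*u = 1)
    (e1 : p*a2 + q*c2 = a1*p + b1*u) (e2 : p*b2 + q*d2 = a1*q + b1*v)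
    (e3 : u*a2 + v*c2 = c1*p + d1*u) (e4 : u*b2 + v*d2 = c1*q + d1*v)
    (hc1 : c1 ≠ 0) :
    a1 = a2 ∧ b1 = b2 ∧ c1 = c2 ∧ d1 = d2 := by
  rcases hc1.lt_or_gt with h | h
  · have hres := keyPos r s a1 (-b1) (-c1) d1 a2 (-b2) (-c2) d2 p (-q) (-u) v hD tr1
      (by linear_combination det1)
      (by rwa [abs_neg, abs_neg]) (by rwa [abs_neg]) (by rwa [abs_neg])
      (by rw [abs_neg, abs_neg]; exact tie1)
      tr2 (by linear_combination det2)
      (by rwa [abs_neg, abs_neg]) (by rwa [abs_neg]) (by rwa [abs_neg])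
      (by rw [abs_neg, abs_neg]; exact tie2)
      (by linear_combination hdet) (by linear_combination e1) (by linear_combination -e2)
      (by linear_combination -e3) (by linear_combination e4) (by linarith)
    exact ⟨hres.1, by linarith [hres.2.1], by linarith [hres.2.2.1], hres.2.2.2⟩
  · exact keyPos r s a1 b1 c1 d1 a2 b2 c2 d2 p q u v hD tr1 det1 hb1 hl1 hr1 tie1
      tr2 det2 hb2 hl2 hr2 tie2 hdet e1 e2 e3 e4 h

theorem stmt_15 (r s : ℤ)
    (hirr : Irreducible (Polynomial.X ^ 2 - Polynomial.C (r : ℚ) * Polynomial.X +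
      Polynomial.C (s : ℚ)))
    (hdisc : (r : ℚ) ^ 2 / 4 - (s : ℚ) < 0) :
    let M : Set (Matrix (Fin 2) (Fin 2) ℤ) := {B |
      B 0 0 + B 1 1 = r ∧ B 0 0 * B 1 1 - B 0 1 * B 1 0 = s ∧
      0 < |B 1 0| ∧ |B 1 0| ≤ |B 0 1| ∧
      -|B 1 0| < B 0 0 - B 1 1 ∧ B 0 0 - B 1 1 ≤ |B 1 0| ∧
      (|B 1 0| = |B 0 1| → 0 ≤ B 0 0 - B 1 1)}
    M.Finite ∧ ∀ B : Matrix (Fin 2) (Fin 2) ℤ, B.trace = r → B.det = s →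
      ∃! B' : Matrix (Fin 2) (Fin 2) ℤ, B' ∈ M ∧
        ∃ U : Matrix.SpecialLinearGroup (Fin 2) ℤ,
          B' = (↑(U⁻¹) : Matrix (Fin 2) (Fin 2) ℤ) * B * (↑U : Matrix (Fin 2) (Fin 2) ℤ) := by
  intro M
  have hD : r^2 < 4*s := by
    have h : ((r:ℤ):ℚ)^2 < 4*((s:ℤ):ℚ) := by push_cast; linarith
    exact_mod_cast h
  constructor
  · -- finiteness
    have hfin : (Set.pi (Set.univ : Set (Fin 2)) (fun _ =>
        Set.pi (Set.univ : Set (Fin 2)) fun _ =>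
          Set.Icc (-(|r| + (4*s - r^2))) (|r| + (4*s - r^2)))).Finite :=
      Set.Finite.pi fun _ => Set.Finite.pi fun _ => Set.finite_Icc _ _
    refine Set.Finite.subset hfin ?_
    intro B hB
    obtain ⟨htr, hdet, h3, h4, h5, h6, _⟩ := hB
    have hdisc' : (B 0 0 - B 1 1)^2 + 4*(B 0 1 * B 1 0) = r^2 - 4*s := by
      linear_combination (B 0 0 + B 1 1 + r)*htr - 4*hdet
    have hbc : B 0 1 * B 1 0 < 0 := by
      linarith [hdisc', sq_nonneg (B 0 0 - B 1 1), hD]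
    have h1c : 1 ≤ |B 1 0| := Int.one_le_abs (abs_pos.mp h3)
    have habs_ad : |B 0 0 - B 1 1| ≤ |B 1 0| := abs_le.mpr ⟨by linarith, h6⟩
    have hsq_ad : (B 0 0 - B 1 1)^2 ≤ |B 1 0|^2 := by
      nlinarith [abs_nonneg (B 0 0 - B 1 1), sq_abs (B 0 0 - B 1 1)]
    have habsmul : |B 0 1| * |B 1 0| = -(B 0 1 * B 1 0) := by
      rw [← abs_mul]; exact abs_of_neg hbc
    have h3c : 3*(|B 1 0| * |B 1 0|) ≤ 4*s - r^2 := by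
      nlinarith [habsmul, h4, h1c, hdisc', hsq_ad, sq_abs (B 1 0), abs_nonneg (B 1 0)]
    have hY : |B 1 0| ≤ 4*s - r^2 := by nlinarith [h1c, h3c]
    have hX : |B 0 1| ≤ 4*s - r^2 := by
      nlinarith [h3c, habsmul, hdisc', hsq_ad, sq_abs (B 1 0), h1c,
        mul_nonneg (abs_nonneg (B 0 1)) (by linarith : (0:ℤ) ≤ |B 1 0| - 1)]
    have habs_ad' : |B 0 0 - B 1 1| ≤ 4*s - r^2 := le_trans habs_ad hY
    have hKpos : (0:ℤ) ≤ |r| + (4*s - r^2) := by linarith [abs_nonneg r]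
    intro i _
    intro j _
    simp only [Set.mem_Icc]
    have hr1 := le_abs_self r
    have hr2 := neg_abs_le r
    have had1 := (abs_le.mp habs_ad').1
    have had2 := (abs_le.mp habs_ad').2
    have hb1 := (abs_le.mp hX).1
    have hb2 := (abs_le.mp hX).2
    have hc1 := (abs_le.mp hY).1
    have hc2 := (abs_le.mp hY).2
    fin_cases i <;> fin_cases j <;>
      simp only [Fin.mk_zero, Fin.mk_one, Set.mem_Icc] <;> constructor <;> linarith
  · intro B htrB hdetB
    have htr' : B 0 0 + B 1 1 = r := by rw [Matrix.trace_fin_two] at htrB; exact htrB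
    have hdet' : B 0 0 * B 1 1 - B 0 1 * B 1 0 = s := by
      rw [Matrix.det_fin_two] at hdetB; linarith
    obtain ⟨U, hU⟩ := exists_red r s hD (B 1 0).natAbs (B 0 0) (B 0 1) (B 1 0) (B 1 1)
      rfl htr' hdet'
    rw [← Matrix.eta_fin_two B] at hU
    refine ⟨(↑(U⁻¹) : Matrix (Fin 2) (Fin 2) ℤ) * B * (↑U : Matrix (Fin 2) (Fin 2) ℤ),
      ⟨hU, U, rfl⟩, ?_⟩
    rintro Y ⟨hYmem, W, rfl⟩
    obtain ⟨X1, hX1⟩ : ∃ X, X = (↑(W⁻¹) : Matrix (Fin 2) (Fin 2) ℤ) * B *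
      (↑W : Matrix (Fin 2) (Fin 2) ℤ) := ⟨_, rfl⟩
    obtain ⟨X2, hX2⟩ : ∃ X, X = (↑(U⁻¹) : Matrix (Fin 2) (Fin 2) ℤ) * B *
      (↑U : Matrix (Fin 2) (Fin 2) ℤ) := ⟨_, rfl⟩
    rw [← hX1, ← hX2]
    rw [← hX1] at hYmem
    rw [← hX2] at hU
    have cU : ∀ Z : Matrix (Fin 2) (Fin 2) ℤ,
        (↑U : Matrix (Fin 2) (Fin 2) ℤ) * ((↑(U⁻¹) : Matrix (Fin 2) (Fin 2) ℤ) * Z) = Z := by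
      intro Z
      rw [← Matrix.mul_assoc, ← Matrix.SpecialLinearGroup.coe_mul, mul_inv_cancel,
        Matrix.SpecialLinearGroup.coe_one, Matrix.one_mul]
    have cW : ∀ Z : Matrix (Fin 2) (Fin 2) ℤ,
        (↑W : Matrix (Fin 2) (Fin 2) ℤ) * ((↑(W⁻¹) : Matrix (Fin 2) (Fin 2) ℤ) * Z) = Z := by
      intro Z
      rw [← Matrix.mul_assoc, ← Matrix.SpecialLinearGroup.coe_mul, mul_inv_cancel,
        Matrix.SpecialLinearGroup.coe_one, Matrix.one_mul]
    have h5 : (↑(W⁻¹ * U) : Matrix (Fin 2) (Fin 2) ℤ) * X2 =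
        X1 * (↑(W⁻¹ * U) : Matrix (Fin 2) (Fin 2) ℤ) := by
      rw [hX1, hX2, Matrix.SpecialLinearGroup.coe_mul]
      simp only [Matrix.mul_assoc]
      rw [cU, cW]
    set V := W⁻¹ * U with hV
    have detV : (↑V : Matrix (Fin 2) (Fin 2) ℤ) 0 0 * (↑V : Matrix (Fin 2) (Fin 2) ℤ) 1 1 -
        (↑V : Matrix (Fin 2) (Fin 2) ℤ) 0 1 * (↑V : Matrix (Fin 2) (Fin 2) ℤ) 1 0 = 1 := by
      have hv2 := V.2
      rw [Matrix.det_fin_two] at hv2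
      linarith
    have e00 := congrFun (congrFun h5 0) 0
    have e01 := congrFun (congrFun h5 0) 1
    have e10 := congrFun (congrFun h5 1) 0
    have e11 := congrFun (congrFun h5 1) 1
    simp only [Matrix.mul_apply, Fin.sum_univ_two] at e00 e01 e10 e11
    obtain ⟨t1, d1, c1p, c1b, c1l, c1r, c1t⟩ := hYmem
    obtain ⟨t2, d2, c2p, c2b, c2l, c2r, c2t⟩ := hU
    have hc1ne : X1 1 0 ≠ 0 := abs_pos.mp c1p
    obtain ⟨ha, hb, hc, hd⟩ := keyFull r s (X1 0 0) (X1 0 1) (X1 1 0) (X1 1 1)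
      (X2 0 0) (X2 0 1) (X2 1 0) (X2 1 1)
      ((↑V : Matrix (Fin 2) (Fin 2) ℤ) 0 0) ((↑V : Matrix (Fin 2) (Fin 2) ℤ) 0 1)
      ((↑V : Matrix (Fin 2) (Fin 2) ℤ) 1 0) ((↑V : Matrix (Fin 2) (Fin 2) ℤ) 1 1)
      hD t1 d1 c1b c1l c1r c1t t2 d2 c2b c2l c2r c2t detV
      (by linarith [e00]) (by linarith [e01]) (by linarith [e10]) (by linarith [e11]) hc1ne
    ext i j
    fin_cases i <;> fin_cases j
    · exact ha
    · exact hb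
    · exact hc
    · exact hd
end

section
/- Every GL₂(ℤ)-conjugacy class of matrices B ∈ M₂(ℤ) with eigenvalues λ ∈ ℕ (λ ≥ 1) and 0, where B is not a scalar matrix or λ ≠ 0, contains exactly one matrix of the form [[λ, μ],[0,0]] with μ ∈ ℤ and 0 ≤ μ ≤ λ/2. -/
abbrev M2 := Matrix (Fin 2) (Fin 2) ℤ

def mkGL (M N : M2) (h1 : M * N = 1) (h2 : N * M = 1) : GL (Fin 2) ℤ := ⟨M, N, h1, h2⟩

def Conj2 (B X : M2) : Prop :=
  ∃ C : GL (Fin 2) ℤ, (↑(C⁻¹) : M2) * B * (↑C : M2) = X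
lemma eigen_conj (lam a b c d x y u t : ℤ)
    (htr : a + d = lam)
    (h1 : a*x + b*y = lam*x) (h2 : c*x + d*y = lam*y)
    (hut : u*x + t*y = 1) :
    ∃ m : ℤ, ∃ C : GL (Fin 2) ℤ,
      (↑(C⁻¹) : M2) * !![a,b;c,d] * (↑C : M2) = !![lam, m; 0, 0] := by
  have hMN : (!![x,-t;y,u] : M2) * !![u,t;-y,x] = 1 := by
    ext i j; fin_cases i <;> fin_cases j <;>
      simp [Matrix.mul_apply, Fin.sum_univ_two] <;> linarith
  have hNM : (!![u,t;-y,x] : M2) * !![x,-t;y,u] = 1 := by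
    ext i j; fin_cases i <;> fin_cases j <;>
      simp [Matrix.mul_apply, Fin.sum_univ_two] <;> linarith
  refine ⟨(u*a + t*c)*(-t) + (u*b + t*d)*u, mkGL _ _ hMN hNM, ?_⟩
  have hcx : c*x = a*y := by linear_combination h2 - y*htr
  have hby : b*y = d*x := by linear_combination h1 - x*htr
  show (!![u,t;-y,x] : M2) * !![a,b;c,d] * !![x,-t;y,u] = _
  ext i j; fin_cases i <;> fin_cases j
  · simp [Matrix.mul_apply, Fin.sum_univ_two]
    linear_combination u*h1 + t*h2 + lam*hut
  · simp [Matrix.mul_apply, Fin.sum_univ_two]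
  · simp [Matrix.mul_apply, Fin.sum_univ_two]
    linear_combination (-y)*h1 + x*h2
  · simp [Matrix.mul_apply, Fin.sum_univ_two]
    linear_combination (-t)*hcx + (-u)*hby


lemma eigen_primitive (lam a b c d p q : ℤ) (hpq : ¬(p = 0 ∧ q = 0))
    (h1 : a*p + b*q = lam*p) (h2 : c*p + d*q = lam*q) :
    ∃ x y u t : ℤ, a*x + b*y = lam*x ∧ c*x + d*y = lam*y ∧ u*x + t*y = 1 := by
  set g : ℤ := (Int.gcd p q : ℤ) with hg
  have hg0 : g ≠ 0 := by
    simp only [hg, ne_eq, Int.natCast_eq_zero, Int.gcd_eq_zero_iff]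
    tauto
  obtain ⟨x, hx⟩ : (g : ℤ) ∣ p := Int.gcd_dvd_left p q
  obtain ⟨y, hy⟩ : (g : ℤ) ∣ q := Int.gcd_dvd_right p q
  have hcop : IsCoprime x y := by
    rw [Int.isCoprime_iff_gcd_eq_one]
    have hgpos : 0 < Int.gcd p q := Nat.pos_of_ne_zero (by
      intro h; exact (Int.gcd_eq_zero_iff.mp h |> hpq))
    have := Int.gcd_div_gcd_div_gcd (i := p) (j := q) hgpos
    have hx' : p / g = x := by rw [hx]; exact Int.mul_ediv_cancel_left x hg0
    have hy' : q / g = y := by rw [hy]; exact Int.mul_ediv_cancel_left y hg0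
    rwa [hx', hy'] at this
  obtain ⟨u, t, hut⟩ := hcop
  refine ⟨x, y, u, t, ?_, ?_, by linarith⟩
  · have : g * (a*x + b*y) = g * (lam*x) := by rw [hx, hy] at h1; ring_nf; ring_nf at h1; linarith
    exact mul_left_cancel₀ hg0 this
  · have : g * (c*x + d*y) = g * (lam*y) := by rw [hx, hy] at h2; ring_nf; ring_nf at h2; linarith
    exact mul_left_cancel₀ hg0 this
lemma conj2_trans {B X Y : M2} (h1 : Conj2 B X) (h2 : Conj2 X Y) : Conj2 B Y := by
  obtain ⟨C, hC⟩ := h1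
  obtain ⟨D, hD⟩ := h2
  refine ⟨C * D, ?_⟩
  have h3 : (↑((C*D)⁻¹) : M2) = (↑(D⁻¹) : M2) * (↑(C⁻¹) : M2) := by
    rw [mul_inv_rev, Units.val_mul]
  rw [h3, Units.val_mul, ← hD, ← hC]
  noncomm_ring

lemma conj2_symm {B X : M2} (h : Conj2 B X) : Conj2 X B := by
  obtain ⟨C, hC⟩ := h
  refine ⟨C⁻¹, ?_⟩
  rw [inv_inv, ← hC]
  have h1 : (↑C : M2) * (↑(C⁻¹) : M2) = 1 := C.mul_inv
  calc (↑C : M2) * ((↑(C⁻¹) : M2) * B * (↑C : M2)) * (↑(C⁻¹) : M2)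
      = ((↑C : M2) * (↑(C⁻¹) : M2)) * B * ((↑C : M2) * (↑(C⁻¹) : M2)) := by
        noncomm_ring
    _ = B := by rw [h1]; noncomm_ring

lemma conj2_shift (lam m k : ℤ) :
    Conj2 !![lam, m; 0, 0] !![lam, m + lam*k; 0, 0] := by
  have hMN : (!![1,k;0,1] : M2) * !![1,-k;0,1] = 1 := by
    ext i j; fin_cases i <;> fin_cases j <;>
      simp [Matrix.mul_apply, Fin.sum_univ_two]
  have hNM : (!![1,-k;0,1] : M2) * !![1,k;0,1] = 1 := by
    ext i j; fin_cases i <;> fin_cases j <;>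
      simp [Matrix.mul_apply, Fin.sum_univ_two]
  refine ⟨mkGL _ _ hMN hNM, ?_⟩
  show (!![1,-k;0,1] : M2) * _ * !![1,k;0,1] = _
  ext i j; fin_cases i <;> fin_cases j <;>
    simp [Matrix.mul_apply, Fin.sum_univ_two] <;> ring

lemma conj2_sign (lam m : ℤ) :
    Conj2 !![lam, m; 0, 0] !![lam, -m; 0, 0] := by
  have hMN : (!![1,0;0,-1] : M2) * !![1,0;0,-1] = 1 := by
    ext i j; fin_cases i <;> fin_cases j <;>
      simp [Matrix.mul_apply, Fin.sum_univ_two]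
  refine ⟨mkGL _ _ hMN hMN, ?_⟩
  show (!![1,0;0,-1] : M2) * _ * !![1,0;0,-1] = _
  ext i j; fin_cases i <;> fin_cases j <;>
    simp [Matrix.mul_apply, Fin.sum_univ_two]

lemma solve1 (lam q mu nu : ℤ) (hl : 1 ≤ lam) (hm0 : 0 ≤ mu) (hm2 : 2*mu ≤ lam)
    (hn0 : 0 ≤ nu) (hn2 : 2*nu ≤ lam) (h : lam*q = nu - mu) : mu = nu := by
  rcases lt_trichotomy q 0 with h' | h' | h'
  · nlinarith
  · rw [h'] at h; linarith
  · nlinarith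

lemma solve2 (lam q mu nu : ℤ) (hl : 1 ≤ lam) (hm0 : 0 ≤ mu) (hm2 : 2*mu ≤ lam)
    (hn0 : 0 ≤ nu) (hn2 : 2*nu ≤ lam) (h : lam*q = nu + mu) : mu = nu := by
  rcases lt_trichotomy q 0 with h' | h' | h'
  · nlinarith
  · rw [h'] at h; linarith
  · nlinarith

lemma conj2_uniq (lam μ ν : ℤ) (hl : 1 ≤ lam)
    (hμ : 0 ≤ μ ∧ 2*μ ≤ lam) (hν : 0 ≤ ν ∧ 2*ν ≤ lam)
    (h : Conj2 !![lam, μ; 0, 0] !![lam, ν; 0, 0]) : μ = ν := by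
  obtain ⟨C, hC⟩ := h
  have h1 : (↑C : M2) * (↑(C⁻¹) : M2) = 1 := C.mul_inv
  have hswap : !![lam, μ; 0, 0] * (↑C : M2) = (↑C : M2) * !![lam, ν; 0, 0] := by
    have h2 := congrArg (fun X => (↑C : M2) * X) hC
    rw [← h2]
    calc !![lam, μ; 0, 0] * (↑C : M2)
        = ((↑C : M2) * (↑(C⁻¹) : M2)) * !![lam, μ; 0, 0] * (↑C : M2) := by
          rw [h1]; noncomm_ring
      _ = _ := by noncomm_ring
  set p := (↑C : M2) 0 0 with hp
  set q := (↑C : M2) 0 1 with hq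
  set r := (↑C : M2) 1 0 with hrr
  set s := (↑C : M2) 1 1 with hs
  have hCeta : (↑C : M2) = !![p, q; r, s] := by
    rw [hp, hq, hrr, hs, ← Matrix.eta_fin_two (↑C : M2)]
  rw [hCeta] at hswap
  have e10 := congrFun (congrFun hswap 1) 0
  have e01 := congrFun (congrFun hswap 0) 1
  simp [Matrix.mul_apply, Fin.sum_univ_two] at e10 e01
  have hr : r = 0 := by rcases e10 with h' | h' <;> omega
  have hdet : IsUnit ((↑C : M2).det) := by
    refine IsUnit.of_mul_eq_one ((↑(C⁻¹) : M2).det) ?_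
    rw [← Matrix.det_mul, h1, Matrix.det_one]
  rw [hCeta, Matrix.det_fin_two_of, hr, mul_zero, sub_zero] at hdet
  obtain ⟨hμ0, hμ2⟩ := hμ
  obtain ⟨hν0, hν2⟩ := hν
  rcases Int.isUnit_iff.mp hdet with hps | hps
  · rcases Int.eq_one_or_neg_one_of_mul_eq_one' hps with ⟨hp1, hs1⟩ | ⟨hp1, hs1⟩
    · rw [hp1, hs1] at e01
      exact solve1 lam q μ ν hl hμ0 hμ2 hν0 hν2 (by linarith)
    · rw [hp1, hs1] at e01
      exact (solve1 lam q ν μ hl hν0 hν2 hμ0 hμ2 (by linarith)).symm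
  · have hps' : p * (-s) = 1 := by linarith
    rcases Int.eq_one_or_neg_one_of_mul_eq_one' hps' with ⟨hp1, hs1⟩ | ⟨hp1, hs1⟩
    · have hs1' : s = -1 := by linarith
      rw [hp1, hs1'] at e01
      exact solve2 lam q μ ν hl hμ0 hμ2 hν0 hν2 (by linarith)
    · have hs1' : s = 1 := by linarith
      rw [hp1, hs1'] at e01
      exact solve2 lam (-q) μ ν hl hμ0 hμ2 hν0 hν2 (by linarith)

theorem stmt_16 (lam : ℕ) (hl : 1 ≤ lam) (B : Matrix (Fin 2) (Fin 2) ℤ)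
    (htr : B.trace = (lam : ℤ)) (hdet : B.det = 0) :
    ∃! μ : ℤ, (0 ≤ μ ∧ 2 * μ ≤ (lam : ℤ)) ∧
      ∃ C : GL (Fin 2) ℤ, (↑(C⁻¹) : Matrix (Fin 2) (Fin 2) ℤ) * B *
        (↑C : Matrix (Fin 2) (Fin 2) ℤ) = !![(lam : ℤ), μ; 0, 0] := by
  set L : ℤ := (lam : ℤ) with hLdef
  have hL : 1 ≤ L := by rw [hLdef]; exact_mod_cast hl
  set a := B 0 0 with ha
  set b := B 0 1 with hb
  set c := B 1 0 with hc
  set d := B 1 1 with hd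
  have hBeta : B = !![a, b; c, d] := by
    rw [ha, hb, hc, hd, ← Matrix.eta_fin_two B]
  have htr' : a + d = L := by
    rw [Matrix.trace_fin_two] at htr; exact htr
  have hdet' : a * d - b * c = 0 := by
    rw [Matrix.det_fin_two] at hdet; linarith
  -- find an eigenvector
  have hPQ : ∃ p q : ℤ, ¬(p = 0 ∧ q = 0) ∧ a*p + b*q = L*p ∧ c*p + d*q = L*q := by
    by_cases h0 : a = 0 ∧ c = 0
    · refine ⟨b, d, ?_, by linear_combination b*htr', by linear_combination d*htr' - hdet'⟩
      intro ⟨_, hd0⟩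
      rw [h0.1, hd0] at htr'
      omega
    · exact ⟨a, c, h0, by linear_combination a*htr' - hdet', by linear_combination c*htr'⟩
  obtain ⟨p, q, hpq, he1, he2⟩ := hPQ
  obtain ⟨x, y, u, t, hx1, hx2, hut⟩ := eigen_primitive L a b c d p q hpq he1 he2
  obtain ⟨m, C0, hC0⟩ := eigen_conj L a b c d x y u t htr' hx1 hx2 hut
  have hBm : Conj2 B !![L, m; 0, 0] := by
    rw [hBeta]; exact ⟨C0, hC0⟩
  -- normalize m
  set r := m % L with hrdef
  have hr0 : 0 ≤ r := Int.emod_nonneg m (by omega)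
  have hrL : r < L := Int.emod_lt_of_pos m (by omega)
  have hBr : Conj2 B !![L, r; 0, 0] := by
    refine conj2_trans hBm ?_
    have := conj2_shift L m (-(m / L))
    have hh : m + L * (-(m / L)) = r := by rw [hrdef, Int.emod_def]; ring
    rwa [hh] at this
  have hmain : ∃ μ : ℤ, (0 ≤ μ ∧ 2 * μ ≤ L) ∧ Conj2 B !![L, μ; 0, 0] := by
    by_cases h2 : 2 * r ≤ L
    · exact ⟨r, ⟨hr0, h2⟩, hBr⟩
    · refine ⟨L - r, ⟨by omega, by omega⟩, ?_⟩
      refine conj2_trans (conj2_trans hBr (conj2_sign L r)) ?_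
      have := conj2_shift L (-r) 1
      have hh : -r + L * 1 = L - r := by ring
      rwa [hh] at this
  obtain ⟨μ, ⟨hμ0, hμ2⟩, hμc⟩ := hmain
  refine ⟨μ, ⟨⟨hμ0, hμ2⟩, hμc⟩, ?_⟩
  rintro y ⟨⟨hy0, hy2⟩, hyc⟩
  exact conj2_uniq L y μ hL ⟨hy0, by linarith⟩ ⟨hμ0, by linarith⟩
    (conj2_trans (conj2_symm hyc) hμc)
end

section
/- Every GL₂(ℤ)-conjugacy class of nonzero nilpotent matrices in M₂(ℤ) contains exactly one matrix of the form [[0,m],[0,0]] with m ∈ ℕ, m ≥ 1. -/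
open Matrix


lemma units_of_det (p q x y : ℤ) (hε : (p*y - q*x)*(p*y - q*x) = 1) :
    ∃ C : GL (Fin 2) ℤ, (↑C : Matrix (Fin 2) (Fin 2) ℤ) = !![p, x; q, y] ∧
      (↑(C⁻¹) : Matrix (Fin 2) (Fin 2) ℤ) =
        !![(p*y - q*x)*y, -((p*y - q*x)*x); -((p*y - q*x)*q), (p*y - q*x)*p] := by
  refine ⟨⟨!![p,x;q,y], !![(p*y - q*x)*y, -((p*y - q*x)*x); -((p*y - q*x)*q), (p*y - q*x)*p], ?_, ?_⟩, rfl, rfl⟩ <;>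
  · ext i j
    fin_cases i <;> fin_cases j <;>
      simp [Matrix.mul_apply, Fin.sum_univ_succ] <;>
      first
        | linear_combination hε
        | ring

lemma conj_to_nilp (a b c t p q x y : ℤ)
    (hε : (p*y - q*x)*(p*y - q*x) = 1)
    (h1 : a*p + b*q = 0) (h2 : c*p - a*q = 0)
    (h3 : a*x + b*y = t*p) (h4 : c*x - a*y = t*q) :
    ∃ C : GL (Fin 2) ℤ,
      (↑(C⁻¹) : Matrix (Fin 2) (Fin 2) ℤ) * !![a, b; c, -a] * (↑C : Matrix (Fin 2) (Fin 2) ℤ) = !![0, t; 0, 0] := by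
  obtain ⟨C, hC, hCinv⟩ := units_of_det p q x y hε
  refine ⟨C, ?_⟩
  rw [hC, hCinv, mul_assoc]
  have hBC : !![a, b; c, -a] * !![p, x; q, y] = !![0, t*p; 0, t*q] := by
    ext i j
    fin_cases i <;> fin_cases j <;>
      simp [Matrix.mul_apply, Fin.sum_univ_succ] <;>
      first
        | linear_combination h1
        | linear_combination h2
        | linear_combination h3
        | linear_combination h4
  rw [hBC]
  ext i j
  fin_cases i <;> fin_cases j <;>
    simp [Matrix.mul_apply, Fin.sum_univ_succ] <;>
    first
      | linear_combination t*hε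
      | ring

lemma exists_pos (B : Matrix (Fin 2) (Fin 2) ℤ) (hB : B ≠ 0) (hnil : B * B = 0) :
    ∃ t : ℤ, 0 < t ∧ ∃ C : GL (Fin 2) ℤ,
      (↑(C⁻¹) : Matrix (Fin 2) (Fin 2) ℤ) * B * (↑C : Matrix (Fin 2) (Fin 2) ℤ) = !![0, t; 0, 0] := by
  set a := B 0 0 with ha'
  set b := B 0 1 with hb'
  set c := B 1 0 with hc'
  set d := B 1 1 with hd'
  have hent : ∀ i j, (B * B) i j = 0 := by intro i j; rw [hnil]; rfl
  have E1 : a*a + b*c = 0 := by have := hent 0 0; simpa [Matrix.mul_apply, Fin.sum_univ_succ] using this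
  have E2 : a*b + b*d = 0 := by have := hent 0 1; simpa [Matrix.mul_apply, Fin.sum_univ_succ] using this
  have E3 : c*a + d*c = 0 := by have := hent 1 0; simpa [Matrix.mul_apply, Fin.sum_univ_succ] using this
  have E4 : c*b + d*d = 0 := by have := hent 1 1; simpa [Matrix.mul_apply, Fin.sum_univ_succ] using this
  have hBeta : B = !![a, b; c, d] := by
    ext i j; fin_cases i <;> fin_cases j <;> rfl
  by_cases hc : c = 0
  · -- then a = 0, d = 0, b ≠ 0
    have ha : a = 0 := by
      have : a * a = 0 := by rw [hc] at E1; linarith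
      exact mul_self_eq_zero.mp this
    have hd : d = 0 := by
      have : d * d = 0 := by rw [hc] at E4; linarith
      exact mul_self_eq_zero.mp this
    have hbne : b ≠ 0 := by
      intro hb
      apply hB
      rw [hBeta, ha, hb, hc, hd]
      ext i j; fin_cases i <;> fin_cases j <;> simp
    have hBform : B = !![(0:ℤ), b; 0, -0] := by
      rw [hBeta, ha, hc, hd]; norm_num
    rcases hbne.lt_or_gt with hblt | hbgt
    · obtain ⟨C, hC⟩ := conj_to_nilp 0 b 0 (-b) 1 0 0 (-1) (by ring) (by ring) (by ring)
        (by ring) (by ring)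
      exact ⟨-b, by linarith, C, by rw [hBform]; exact hC⟩
    · obtain ⟨C, hC⟩ := conj_to_nilp 0 b 0 b 1 0 0 1 (by ring) (by ring) (by ring)
        (by ring) (by ring)
      exact ⟨b, hbgt, C, by rw [hBform]; exact hC⟩
  · -- c ≠ 0
    have hd : d = -a := by
      have h0 : c * (a + d) = 0 := by linear_combination E3
      rcases mul_eq_zero.mp h0 with h | h
      · exact absurd h hc
      · linarith
    have hBeta2 : B = !![a, b; c, -a] := by rw [hBeta, hd]
    set g : ℤ := (Int.gcd a c : ℤ) with hg'
    have hgposn : 0 < Int.gcd a c := Int.gcd_pos_of_ne_zero_right a hc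
    have hgpos : 0 < g := by rw [hg']; exact_mod_cast hgposn
    have hgne : g ≠ 0 := ne_of_gt hgpos
    obtain ⟨p, hp⟩ : g ∣ a := Int.gcd_dvd_left a c
    obtain ⟨q, hq⟩ : g ∣ c := Int.gcd_dvd_right a c
    have hqne : q ≠ 0 := by rintro rfl; simp at hq; exact hc hq
    have hcop : IsCoprime p q := by
      rw [Int.isCoprime_iff_gcd_eq_one]
      have h1 : p = a / g := by rw [hp, Int.mul_ediv_cancel_left _ hgne]
      have h2 : q = c / g := by rw [hq, Int.mul_ediv_cancel_left _ hgne]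
      rw [h1, h2, hg']
      exact Int.gcd_div_gcd_div_gcd hgposn
    have hkey : g*p*p + b*q = 0 := by
      have h0 : g * (g*p*p + b*q) = 0 := by linear_combination E1 - (g*p + a)*hp - b*hq
      exact (mul_eq_zero.mp h0).resolve_left hgne
    have hqg : q ∣ g := by
      have h1 : q ∣ g * p * p := ⟨-b, by linear_combination hkey⟩
      have h2 : q ∣ g * p := (IsCoprime.symm hcop).dvd_of_dvd_mul_right h1
      exact (IsCoprime.symm hcop).dvd_of_dvd_mul_right h2
    obtain ⟨t0, ht0⟩ := hqg
    have ht0ne : t0 ≠ 0 := by rintro rfl; simp at ht0; exact hgne ht0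
    obtain ⟨x, y, hxy⟩ : ∃ x y : ℤ, p * y - q * x = 1 := by
      obtain ⟨u, v, huv⟩ := hcop
      exact ⟨-v, u, by linarith⟩
    have hbval : b = -(t0 * p * p) := by
      have h0 : q * (b + t0 * p * p) = 0 := by linear_combination hkey - p*p*ht0
      have := (mul_eq_zero.mp h0).resolve_left hqne
      linarith
    have hBform : B = !![q*t0*p, -(t0*p*p); q*(q*t0), -(q*t0*p)] := by
      rw [hBeta2]
      ext i j
      fin_cases i <;> fin_cases j <;>
        simp
      · linear_combination hp + p*ht0
      · linear_combination hbval
      · linear_combination hq + q*ht0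
      · linear_combination hp + p*ht0
    rcases ht0ne.lt_or_gt with ht0lt | ht0gt
    · -- t0 < 0, take t = -t0
      obtain ⟨C, hC⟩ := conj_to_nilp (q*t0*p) (-(t0*p*p)) (q*(q*t0)) (-t0) p q x y
        (by linear_combination (p*y - q*x + 1)*hxy)
        (by ring) (by ring)
        (by linear_combination (-t0*p)*hxy)
        (by linear_combination (-t0*q)*hxy)
      exact ⟨-t0, by linarith, C, by rw [hBform]; exact hC⟩
    · -- t0 > 0, flip sign of second column
      obtain ⟨C, hC⟩ := conj_to_nilp (q*t0*p) (-(t0*p*p)) (q*(q*t0)) t0 p q (-x) (-y)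
        (by linear_combination (p*y - q*x + 1)*hxy)
        (by ring) (by ring)
        (by linear_combination (t0*p)*hxy)
        (by linear_combination (t0*q)*hxy)
      exact ⟨t0, ht0gt, C, by rw [hBform]; exact hC⟩


lemma entry_dvd (m : ℤ) (P Q : Matrix (Fin 2) (Fin 2) ℤ) (i j : Fin 2) :
    m ∣ (P * !![0, m; 0, 0] * Q) i j := by
  have h : !![0, m; 0, 0] = m • !![(0:ℤ), 1; 0, 0] := by
    ext i j; fin_cases i <;> fin_cases j <;> simp
  rw [h, Matrix.mul_smul, Matrix.smul_mul]
  simp only [Matrix.smul_apply, smul_eq_mul]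
  exact dvd_mul_right _ _

lemma conj_dvd (B : Matrix (Fin 2) (Fin 2) ℤ) (m n : ℤ) (C D : GL (Fin 2) ℤ)
    (hC : (↑(C⁻¹) : Matrix (Fin 2) (Fin 2) ℤ) * B * (↑C : Matrix (Fin 2) (Fin 2) ℤ) = !![0, m; 0, 0])
    (hD : (↑(D⁻¹) : Matrix (Fin 2) (Fin 2) ℤ) * B * (↑D : Matrix (Fin 2) (Fin 2) ℤ) = !![0, n; 0, 0]) :
    m ∣ n := by
  set Cm : Matrix (Fin 2) (Fin 2) ℤ := ↑C with hCm
  set Ci : Matrix (Fin 2) (Fin 2) ℤ := ↑(C⁻¹) with hCi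
  set Dm : Matrix (Fin 2) (Fin 2) ℤ := ↑D with hDm
  set Di : Matrix (Fin 2) (Fin 2) ℤ := ↑(D⁻¹) with hDi
  have e1 : Cm * Ci = 1 := C.mul_inv
  have hB1 : B = Cm * !![0, m; 0, 0] * Ci := by
    rw [← hC]
    calc B = (Cm * Ci) * B * (Cm * Ci) := by rw [e1]; simp
      _ = Cm * (Ci * B * Cm) * Ci := by noncomm_ring
  have key : !![0, n; 0, 0] = (Di * Cm) * !![0, m; 0, 0] * (Ci * Dm) := by
    rw [← hD, hB1]; noncomm_ring
  have h2 := entry_dvd m (Di * Cm) (Ci * Dm) 0 1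
  rw [← key] at h2
  simpa using h2

theorem stmt_17 (B : Matrix (Fin 2) (Fin 2) ℤ) (hB : B ≠ 0) (hnil : B * B = 0) :
    ∃! m : ℕ, 1 ≤ m ∧ ∃ C : GL (Fin 2) ℤ,
      (↑(C⁻¹) : Matrix (Fin 2) (Fin 2) ℤ) * B * (↑C : Matrix (Fin 2) (Fin 2) ℤ) =
        !![0, (m : ℤ); 0, 0] := by
  obtain ⟨t, htpos, C, hC⟩ := exists_pos B hB hnil
  have hcast : ((t.toNat : ℤ)) = t := Int.toNat_of_nonneg htpos.le
  refine ⟨t.toNat, ⟨by omega, C, by rw [hcast]; exact hC⟩, ?_⟩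
  rintro n ⟨hn1, D, hD⟩
  have d1 : (n : ℤ) ∣ t := conj_dvd B (n : ℤ) t D C hD hC
  have d2 : t ∣ (n : ℤ) := conj_dvd B t (n : ℤ) C D hC hD
  have hnpos : (0:ℤ) < (n : ℤ) := by exact_mod_cast hn1
  have : (n : ℤ) = t := Int.dvd_antisymm hnpos.le htpos.le d1 d2
  omega
end
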